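/- arXiv:2503.00406 — 15 statements merged into one kernel-verified Lean document; each statement's English description precedes it below -/
import Mathlib

section
/- If G is a graph with finite chromatic number χ(G), then for every positive integer n, the minimum number of colors in a proper Z-labeling of G whose closed neighborhood sums are all ≡ 0 (mod n) equals χ(G). -/
open SimpleGraph

def ClosedColoring {V : Type*} (G : SimpleGraph V) [G.LocallyFinite]
    (n k : ℤ) (ℓ : V → ℤ) : Prop :=
  ∀ v : V, (ℓ v + ∑ u ∈ G.neighborFinset v, ℓ u) ≡ k [ZMOD n]

def ProperLabeling {V : Type*} (G : SimpleGraph V) (ℓ : V → ℤ) : Prop :=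
  ∀ ⦃v w : V⦄, G.Adj v w → ℓ v ≠ ℓ w

def HasClosedChrom {V : Type*} (G : SimpleGraph V) [G.LocallyFinite]
    (n k : ℤ) (c : ℕ) : Prop :=
  (∃ ℓ : V → ℤ, ProperLabeling G ℓ ∧ ClosedColoring G n k ℓ ∧
      (Set.range ℓ).Finite ∧ (Set.range ℓ).ncard = c) ∧
  ∀ ℓ : V → ℤ, ProperLabeling G ℓ → ClosedColoring G n k ℓ →
      (Set.range ℓ).Finite → c ≤ (Set.range ℓ).ncard

theorem chi_n_zero_eq_chi {V : Type*} (G : SimpleGraph V) [G.LocallyFinite]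
    (n : ℕ) (hn : 0 < n) (c : ℕ) (hc : G.chromaticNumber = c) :
    HasClosedChrom G n 0 c := by
  have key : ∀ ℓ : V → ℤ, ProperLabeling G ℓ → (Set.range ℓ).Finite →
      c ≤ (Set.range ℓ).ncard := by
    intro ℓ hp hfin
    haveI : Fintype ↥(Set.range ℓ) := hfin.fintype
    have col : G.Coloring ↥(Set.range ℓ) :=
      SimpleGraph.Coloring.mk (fun v => ⟨ℓ v, Set.mem_range_self v⟩)
        (fun hvw h => hp hvw (by simpa using congrArg Subtype.val h))
    have hle := col.colorable.chromaticNumber_le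
    rw [hc] at hle
    have h2 : c ≤ Fintype.card ↥(Set.range ℓ) := by exact_mod_cast hle
    rwa [Set.ncard_eq_toFinset_card', Set.toFinset_card]
  -- get a coloring with c colors
  have hcolc : G.Colorable c := by
    rw [← SimpleGraph.chromaticNumber_le_iff_colorable, hc]
  obtain ⟨f⟩ := hcolc
  set g : Fin c → ℤ := fun i => (n : ℤ) * ((i : ℕ) + 1) with hg
  set ℓ : V → ℤ := fun v => g (f v) with hℓ
  have hprop : ProperLabeling G ℓ := by
    intro v w hvw hEq
    apply f.valid hvw
    have hn' : (n : ℤ) ≠ 0 := by exact_mod_cast hn.ne'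
    have : ((f v : ℕ) : ℤ) + 1 = ((f w : ℕ) : ℤ) + 1 := mul_left_cancel₀ hn' hEq
    have : (f v : ℕ) = (f w : ℕ) := by omega
    exact Fin.ext this
  have hclosed : ClosedColoring G n 0 ℓ := by
    intro v
    have hdvd : (n : ℤ) ∣ (ℓ v + ∑ u ∈ G.neighborFinset v, ℓ u) :=
      dvd_add ⟨_, rfl⟩ (Finset.dvd_sum fun u _ => ⟨_, rfl⟩)
    simpa [Int.modEq_zero_iff_dvd] using hdvd
  have hsub : Set.range ℓ ⊆ g '' Set.univ := by
    rintro x ⟨v, rfl⟩; exact ⟨f v, trivial, rfl⟩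
  have hfin : (Set.range ℓ).Finite :=
    (Set.finite_univ.image g).subset hsub
  have hle2 : (Set.range ℓ).ncard ≤ c := by
    calc (Set.range ℓ).ncard ≤ (g '' Set.univ).ncard :=
          Set.ncard_le_ncard hsub (Set.finite_univ.image g)
      _ ≤ (Set.univ : Set (Fin c)).ncard := Set.ncard_image_le Set.finite_univ
      _ = c := by simp [Set.ncard_univ]
  refine ⟨⟨ℓ, hprop, hclosed, hfin, le_antisymm hle2 (key ℓ hprop hfin)⟩,
    fun ℓ' hp _ hf => key ℓ' hp hf⟩
end

section
/- Let k ∈ ℤ, n ∈ ℤ⁺, and let u be an integer whose residue is a unit in ℤ/nℤ. If a proper closed coloring of G with remainder k mod n of minimum order χ_{n,k}(G) exists, then χ_{n,uk}(G) exists and χ_{n,uk}(G) = χ_{n,k}(G). -/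
open SimpleGraph

lemma scale_proper {V : Type*} (G : SimpleGraph V) (a : ℤ) (ha : a ≠ 0)
    (ℓ : V → ℤ) (hp : ProperLabeling G ℓ) :
    ProperLabeling G (fun v => a * ℓ v) := by
  intro v w hvw h
  exact hp hvw (mul_left_cancel₀ ha h)

lemma scale_closed {V : Type*} (G : SimpleGraph V) [G.LocallyFinite]
    (n a k : ℤ) (ℓ : V → ℤ) (hc : ClosedColoring G n k ℓ) :
    ClosedColoring G n (a * k) (fun v => a * ℓ v) := by
  intro v
  have : a * ℓ v + ∑ u ∈ G.neighborFinset v, a * ℓ u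
      = a * (ℓ v + ∑ u ∈ G.neighborFinset v, ℓ u) := by
    rw [mul_add, Finset.mul_sum]
  rw [this]
  exact (hc v).mul_left a

lemma scale_range {V : Type*} (a : ℤ) (ℓ : V → ℤ) :
    Set.range (fun v => a * ℓ v) = (fun x => a * x) '' Set.range ℓ := by
  ext x; simp [Set.range, Set.image]

lemma scale_ncard {V : Type*} (a : ℤ) (ha : a ≠ 0) (ℓ : V → ℤ) :
    (Set.range (fun v => a * ℓ v)).ncard = (Set.range ℓ).ncard := by
  rw [scale_range]
  exact Set.ncard_image_of_injective _ (mul_right_injective₀ ha)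

lemma scale_finite {V : Type*} (a : ℤ) (ℓ : V → ℤ) (hf : (Set.range ℓ).Finite) :
    (Set.range (fun v => a * ℓ v)).Finite := by
  rw [scale_range]; exact hf.image _

lemma exists_pos_modeq (n : ℕ) (hn : 0 < n) (a : ℤ) :
    ∃ b : ℤ, 0 < b ∧ b ≡ a [ZMOD (n : ℤ)] := by
  refine ⟨a % n + n, ?_, ?_⟩
  · have := Int.emod_nonneg a (by exact_mod_cast hn.ne' : (n : ℤ) ≠ 0)
    omega
  · show (a % ↑n + ↑n) % ↑n = a % ↑n
    have h1 : (a % ↑n + ↑n) % ↑n = a % ↑n % ↑n := by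
      have := Int.add_mul_emod_self_left (a := a % (n:ℤ)) (b := (n:ℤ)) (c := 1)
      simpa using this
    rw [h1, Int.emod_emod_of_dvd _ dvd_rfl]
theorem chi_unit_mul {V : Type*} (G : SimpleGraph V) [G.LocallyFinite]
    (n : ℕ) (hn : 0 < n) (k u : ℤ) (hu : IsUnit (u : ZMod n)) (c : ℕ)
    (h : HasClosedChrom G n k c) :
    HasClosedChrom G n (u * k) c := by
  have hnz : (n : ℤ) ≠ 0 := by exact_mod_cast hn.ne'
  -- obtain an integer inverse of u mod n
  obtain ⟨w0, hw0⟩ := hu.exists_right_inv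
  obtain ⟨w, hwpos, hwmod⟩ := exists_pos_modeq n hn (w0.val : ℤ)
  have : NeZero n := ⟨hn.ne'⟩
  have hw0cast : ((w0.val : ℤ) : ZMod n) = w0 := by
    push_cast [ZMod.natCast_val, ZMod.cast_id]
    rfl
  have hinv : u * w ≡ 1 [ZMOD (n : ℤ)] := by
    have h1 : u * w ≡ u * (w0.val : ℤ) [ZMOD (n:ℤ)] := hwmod.mul_left u
    have h2 : ((u * (w0.val : ℤ) : ℤ) : ZMod n) = ((1 : ℤ) : ZMod n) := by
      rw [Int.cast_mul, hw0cast]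
      simp [hw0]
    exact h1.trans ((ZMod.intCast_eq_intCast_iff _ _ _).mp h2)
  -- key minimality fact for the new remainder
  have key : ∀ ℓ : V → ℤ, ProperLabeling G ℓ → ClosedColoring G (n:ℤ) (u * k) ℓ →
      (Set.range ℓ).Finite → c ≤ (Set.range ℓ).ncard := by
    intro ℓ hp hc hf
    have hc' : ClosedColoring G (n:ℤ) k (fun v => w * ℓ v) := by
      intro v
      have := scale_closed G (n:ℤ) w (u * k) ℓ hc v
      refine this.trans ?_
      have : w * (u * k) ≡ 1 * k [ZMOD (n:ℤ)] := by
        have := hinv.mul_right k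
        calc w * (u * k) = u * w * k := by ring
          _ ≡ 1 * k [ZMOD (n:ℤ)] := this
      simpa using this
    have := h.2 (fun v => w * ℓ v) (scale_proper G w hwpos.ne' ℓ hp) hc'
      (scale_finite w ℓ hf)
    rwa [scale_ncard w hwpos.ne' ℓ] at this
  constructor
  · obtain ⟨ℓ₀, hp₀, hc₀, hf₀, hn₀⟩ := h.1
    obtain ⟨u', hu'pos, hu'mod⟩ := exists_pos_modeq n hn u
    refine ⟨fun v => u' * ℓ₀ v, scale_proper G u' hu'pos.ne' ℓ₀ hp₀, ?_,
      scale_finite u' ℓ₀ hf₀, by rw [scale_ncard u' hu'pos.ne' ℓ₀]; exact hn₀⟩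
    intro v
    exact (scale_closed G (n:ℤ) u' k ℓ₀ hc₀ v).trans (hu'mod.mul_right k)
  · exact key
end

section
/- Let d be a common divisor of k and n (with n, d positive). If χ_{n/d, k/d}(G) exists, then χ_{n,k}(G) exists and χ_{n,k}(G) ≤ χ_{n/d, k/d}(G). -/
open SimpleGraph

theorem chi_divisor {V : Type*} (G : SimpleGraph V) [G.LocallyFinite]
    (n d k : ℤ) (hn : 0 < n) (hd : 0 < d) (hdk : d ∣ k) (hdn : d ∣ n) (c : ℕ)
    (h : HasClosedChrom G (n / d) (k / d) c) :
    ∃ c' : ℕ, HasClosedChrom G n k c' ∧ c' ≤ c := by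
  obtain ⟨⟨ℓ, hprop, hcc, hfin, hcard⟩, _⟩ := h
  have hd0 : d ≠ 0 := hd.ne'
  -- the scaled labeling
  set ℓ' : V → ℤ := fun v => d * ℓ v with hℓ'
  have hprop' : ProperLabeling G ℓ' := by
    intro v w hvw heq
    exact hprop hvw (mul_left_cancel₀ hd0 heq)
  have hcc' : ClosedColoring G n k ℓ' := by
    intro v
    have := (hcc v).mul_left' (c := d)
    simpa [hℓ', Int.mul_ediv_cancel' hdn, Int.mul_ediv_cancel' hdk,
      Finset.mul_sum, mul_add] using this
  have hrange : Set.range ℓ' = (fun x => d * x) '' Set.range ℓ := by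
    ext x; simp [hℓ', Set.range_comp]
  have hinj : Set.InjOn (fun x => d * x) (Set.range ℓ) :=
    fun a _ b _ hab => mul_left_cancel₀ hd0 hab
  have hfin' : (Set.range ℓ').Finite := by
    rw [hrange]; exact hfin.image _
  have hcard' : (Set.range ℓ').ncard = c := by
    rw [hrange, Set.ncard_image_of_injOn hinj, hcard]
  -- the set of achievable cardinalities
  have hP : ∃ m : ℕ, ∃ ℓ : V → ℤ, ProperLabeling G ℓ ∧ ClosedColoring G n k ℓ ∧
      (Set.range ℓ).Finite ∧ (Set.range ℓ).ncard = m :=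
    ⟨c, ℓ', hprop', hcc', hfin', hcard'⟩
  classical
  refine ⟨Nat.find hP, ⟨Nat.find_spec hP, ?_⟩, ?_⟩
  · intro g hg1 hg2 hg3
    exact Nat.find_le ⟨g, hg1, hg2, hg3, rfl⟩
  · exact Nat.find_le ⟨ℓ', hprop', hcc', hfin', hcard'⟩
end

section
/- If χ_{n,k1}(G) and χ_{n,k2}(G) both exist, then χ_{n,k1+k2}(G) exists and χ_{n,k1+k2}(G) ≤ χ_{n,k1}(G) · χ_{n,k2}(G). -/
open SimpleGraph

/-- The combining function: injective in the pair, congruent to the sum mod `n`. -/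
noncomputable def combF (n : ℤ) (p : ℤ × ℤ) : ℤ :=
  (p.1 + p.2) % n + n * (Encodable.encode p : ℤ)

lemma combF_modEq (n : ℤ) (p : ℤ × ℤ) : combF n p ≡ p.1 + p.2 [ZMOD n] := by
  unfold combF
  have : ((p.1 + p.2) % n + n * (Encodable.encode p : ℤ)) % n = (p.1 + p.2) % n := by
    simp [Int.add_mul_emod_self_left, Int.emod_emod_of_dvd]
  exact this

lemma combF_injective {n : ℤ} (hn : 0 < n) : Function.Injective (combF n) := by
  intro p q h
  have hp : combF n p % n = (p.1 + p.2) % n := combF_modEq n p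
  have hq : combF n q % n = (q.1 + q.2) % n := combF_modEq n q
  have hr : (p.1 + p.2) % n = (q.1 + q.2) % n := by rw [← hp, ← hq, h]
  have he : n * (Encodable.encode p : ℤ) = n * (Encodable.encode q : ℤ) := by
    have := h
    unfold combF at this
    omega
  have : (Encodable.encode p : ℤ) = (Encodable.encode q : ℤ) :=
    mul_left_cancel₀ (by omega) he
  exact Encodable.encode_injective (by exact_mod_cast this)

theorem chi_add_le_mul {V : Type*} (G : SimpleGraph V) [G.LocallyFinite]
    (n : ℕ) (hn : 0 < n) (k₁ k₂ : ℤ) (c₁ c₂ : ℕ)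
    (h₁ : HasClosedChrom G n k₁ c₁) (h₂ : HasClosedChrom G n k₂ c₂) :
    ∃ c : ℕ, HasClosedChrom G n (k₁ + k₂) c ∧ c ≤ c₁ * c₂ := by
  obtain ⟨⟨ℓ₁, hp₁, hc₁, hf₁, hn₁⟩, _⟩ := h₁
  obtain ⟨⟨ℓ₂, hp₂, hc₂, hf₂, hn₂⟩, _⟩ := h₂
  have hnz : (0 : ℤ) < (n : ℤ) := by exact_mod_cast hn
  set ℓ : V → ℤ := fun v => combF n (ℓ₁ v, ℓ₂ v) with hℓ
  -- ℓ is a proper labeling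
  have hprop : ProperLabeling G ℓ := by
    intro v w hvw h
    exact hp₁ hvw (congrArg Prod.fst (combF_injective hnz h))
  -- ℓ is a closed coloring with remainder k₁ + k₂
  have hmod : ∀ v, ℓ v ≡ ℓ₁ v + ℓ₂ v [ZMOD (n : ℤ)] := fun v => combF_modEq _ _
  have hclosed : ClosedColoring G n (k₁ + k₂) ℓ := by
    intro v
    have hsum : (∑ u ∈ G.neighborFinset v, ℓ u) ≡
        (∑ u ∈ G.neighborFinset v, (ℓ₁ u + ℓ₂ u)) [ZMOD (n : ℤ)] := by
      show _ % _ = _ % _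
      rw [Finset.sum_int_mod, Finset.sum_int_mod _ _ (fun u => ℓ₁ u + ℓ₂ u)]
      congr 1
      exact Finset.sum_congr rfl (fun u _ => hmod u)
    have h1 := hc₁ v
    have h2 := hc₂ v
    calc ℓ v + ∑ u ∈ G.neighborFinset v, ℓ u
        ≡ (ℓ₁ v + ℓ₂ v) + ∑ u ∈ G.neighborFinset v, (ℓ₁ u + ℓ₂ u) [ZMOD (n : ℤ)] :=
          (hmod v).add hsum
      _ = (ℓ₁ v + ∑ u ∈ G.neighborFinset v, ℓ₁ u) +
            (ℓ₂ v + ∑ u ∈ G.neighborFinset v, ℓ₂ u) := by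
          rw [Finset.sum_add_distrib]; ring
      _ ≡ k₁ + k₂ [ZMOD (n : ℤ)] := h1.add h2
  -- range bound
  have hsub : Set.range ℓ ⊆
      ↑(Finset.image (combF n) (hf₁.toFinset ×ˢ hf₂.toFinset)) := by
    rintro x ⟨v, rfl⟩
    simp only [Finset.coe_image, Set.mem_image]
    refine ⟨(ℓ₁ v, ℓ₂ v), ?_, rfl⟩
    simp only [Finset.mem_coe, Finset.mem_product, Set.Finite.mem_toFinset, Set.mem_range]
    exact ⟨⟨v, rfl⟩, ⟨v, rfl⟩⟩
  have hfin : (Set.range ℓ).Finite :=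
    Set.Finite.subset (Finset.finite_toSet _) hsub
  have hcard : (Set.range ℓ).ncard ≤ c₁ * c₂ := by
    calc (Set.range ℓ).ncard
        ≤ (↑(Finset.image (combF n) (hf₁.toFinset ×ˢ hf₂.toFinset)) : Set ℤ).ncard :=
          Set.ncard_le_ncard hsub (Finset.finite_toSet _)
      _ = (Finset.image (combF n) (hf₁.toFinset ×ˢ hf₂.toFinset)).card :=
          Set.ncard_coe_finset _
      _ ≤ (hf₁.toFinset ×ˢ hf₂.toFinset).card := Finset.card_image_le
      _ = hf₁.toFinset.card * hf₂.toFinset.card := Finset.card_product _ _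
      _ = c₁ * c₂ := by
          rw [← hn₁, ← hn₂, Set.ncard_eq_toFinset_card _ hf₁, Set.ncard_eq_toFinset_card _ hf₂]
  -- take the minimum over all valid labelings
  set S : Set ℕ := {m | ∃ ℓ' : V → ℤ, ProperLabeling G ℓ' ∧ ClosedColoring G n (k₁ + k₂) ℓ' ∧
      (Set.range ℓ').Finite ∧ (Set.range ℓ').ncard = m} with hS
  have hmem : (Set.range ℓ).ncard ∈ S := ⟨ℓ, hprop, hclosed, hfin, rfl⟩
  have hSne : S.Nonempty := ⟨_, hmem⟩
  refine ⟨sInf S, ⟨Nat.sInf_mem hSne, ?_⟩, le_trans (Nat.sInf_le hmem) hcard⟩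
  intro ℓ' hp' hc' hf'
  exact Nat.sInf_le ⟨ℓ', hp', hc', hf', rfl⟩
end

section
/- Let G have finite chromatic number. If there exists a closed coloring with remainder k mod n of G (not necessarily proper), then there exists a proper one, and moreover χ_{n,k}(G) ≤ n · χ(G). More precisely, if ℓ is any closed coloring with remainder k mod n, then χ_{n,k}(G) ≤ |image of ℓ| · χ(G). -/
open SimpleGraph

lemma closed_iff_zmod {V : Type*} (G : SimpleGraph V) [G.LocallyFinite]
    (n : ℕ) (k : ℤ) (ℓ : V → ℤ) :
    ClosedColoring G n k ℓ ↔
      ∀ v : V, ((ℓ v : ZMod n) + ∑ u ∈ G.neighborFinset v, (ℓ u : ZMod n))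
        = (k : ZMod n) := by
  unfold ClosedColoring
  constructor
  · intro h v
    have := (ZMod.intCast_eq_intCast_iff _ _ _).mpr (h v)
    push_cast at this
    simpa using this
  · intro h v
    rw [← ZMod.intCast_eq_intCast_iff]
    push_cast
    simpa using h v

lemma aux_construct {V : Type*} (G : SimpleGraph V) [G.LocallyFinite]
    (n : ℕ) (hn : 0 < n) (k : ℤ) {χ : ℕ} (C : G.Coloring (Fin χ))
    (ℓ t : V → ℤ) (hℓ : ClosedColoring G n k ℓ)
    (ht : ∀ v, (t v : ZMod n) = (ℓ v : ZMod n))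
    (S : Finset ℤ) (hS : ∀ v, t v ∈ S) :
    ∃ ℓ' : V → ℤ, ProperLabeling G ℓ' ∧ ClosedColoring G n k ℓ' ∧
      (Set.range ℓ').Finite ∧ (Set.range ℓ').ncard ≤ S.card * χ := by
  classical
  set D : ℕ := (S.image Int.natAbs).sup id with hD
  have hDle : ∀ a ∈ S, |a| ≤ (D : ℤ) := by
    intro a ha
    have : a.natAbs ≤ D := Finset.le_sup (f := id) (Finset.mem_image_of_mem _ ha)
    calc |a| = (a.natAbs : ℤ) := (Int.abs_eq_natAbs a)
      _ ≤ (D : ℤ) := by exact_mod_cast this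
  set B : ℤ := 2 * (D : ℤ) + 1 with hB
  have hBpos : 0 < B := by positivity
  set m : ℤ := (n : ℤ) * B with hm
  have hmpos : 0 < m := by
    apply mul_pos _ hBpos
    exact_mod_cast hn
  set ℓ' : V → ℤ := fun v => t v + m * ((C v : ℕ) : ℤ) with hℓ'
  refine ⟨ℓ', ?_, ?_, ?_, ?_⟩
  · -- proper
    intro v w hvw heq
    have hC : C v ≠ C w := C.valid hvw
    have hC' : ((C v : ℕ) : ℤ) ≠ ((C w : ℕ) : ℤ) := by
      simpa [Fin.val_inj] using hC
    have key : t v - t w = m * (((C w : ℕ) : ℤ) - ((C v : ℕ) : ℤ)) := by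
      simp only [hℓ'] at heq
      linear_combination heq
    have h1 : (1 : ℤ) ≤ |((C w : ℕ) : ℤ) - ((C v : ℕ) : ℤ)| := by
      rcases (sub_ne_zero.mpr hC'.symm).lt_or_gt with h | h
      · rw [abs_of_neg h]; omega
      · rw [abs_of_pos h]; omega
    have habs : |t v - t w| ≤ 2 * (D : ℤ) := by
      calc |t v - t w| ≤ |t v| + |t w| := abs_sub _ _
        _ ≤ (D : ℤ) + (D : ℤ) := add_le_add (hDle _ (hS v)) (hDle _ (hS w))
        _ = 2 * (D : ℤ) := by ring
    have hge : m ≤ |t v - t w| := by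
      rw [key, abs_mul, abs_of_pos hmpos]
      calc m = m * 1 := (mul_one m).symm
        _ ≤ m * |((C w : ℕ) : ℤ) - ((C v : ℕ) : ℤ)| := by
            exact mul_le_mul_of_nonneg_left h1 (le_of_lt hmpos)
      
    have hBle : B ≤ m := by
      calc B = 1 * B := (one_mul B).symm
        _ ≤ (n : ℤ) * B := by
            apply mul_le_mul_of_nonneg_right _ (le_of_lt hBpos)
            exact_mod_cast hn
    omega
  · -- closed coloring
    rw [closed_iff_zmod]
    intro v
    have hcast : ∀ u, ((ℓ' u : ℤ) : ZMod n) = ((ℓ u : ℤ) : ZMod n) := by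
      intro u
      simp only [hℓ', hm]
      push_cast
      simp [ZMod.natCast_self, ht u]
    rw [closed_iff_zmod] at hℓ
    simp only [hcast]
    exact hℓ v
  · -- finite range
    have hsub : Set.range ℓ' ⊆
        ((S ×ˢ (Finset.univ : Finset (Fin χ))).image
          (fun p : ℤ × Fin χ => p.1 + m * ((p.2 : ℕ) : ℤ)) : Finset ℤ) := by
      rintro x ⟨v, rfl⟩
      simp only [Finset.coe_image, Set.mem_image]
      exact ⟨(t v, C v), by simp [hS v], rfl⟩
    exact (Finset.finite_toSet _).subset hsub
  · -- cardinality
    have hsub : Set.range ℓ' ⊆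
        ((S ×ˢ (Finset.univ : Finset (Fin χ))).image
          (fun p : ℤ × Fin χ => p.1 + m * ((p.2 : ℕ) : ℤ)) : Finset ℤ) := by
      rintro x ⟨v, rfl⟩
      simp only [Finset.coe_image, Set.mem_image]
      exact ⟨(t v, C v), by simp [hS v], rfl⟩
    calc (Set.range ℓ').ncard
        ≤ ((S ×ˢ (Finset.univ : Finset (Fin χ))).image
          (fun p : ℤ × Fin χ => p.1 + m * ((p.2 : ℕ) : ℤ)) : Finset ℤ).card := by
          rw [← Set.ncard_coe_finset]
          exact Set.ncard_le_ncard hsub (Finset.finite_toSet _)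
      _ ≤ (S ×ˢ (Finset.univ : Finset (Fin χ))).card := Finset.card_image_le
      _ = S.card * χ := by simp [Finset.card_product]

theorem chi_le_n_mul_chrom {V : Type*} (G : SimpleGraph V) [G.LocallyFinite]
    (n : ℕ) (hn : 0 < n) (k : ℤ) (χ : ℕ) (hχ : G.chromaticNumber = χ)
    (ℓ : V → ℤ) (hℓ : ClosedColoring G n k ℓ) :
    ∃ c : ℕ, HasClosedChrom G n k c ∧ c ≤ n * χ ∧
      ((Set.range ℓ).Finite → c ≤ (Set.range ℓ).ncard * χ) := by
  classical
  have hcol : G.Colorable χ := by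
    rw [← chromaticNumber_le_iff_colorable, hχ]
  obtain ⟨C⟩ := hcol
  have hnz : (n : ℤ) ≠ 0 := by exact_mod_cast hn.ne'
  have hnpos : (0 : ℤ) < n := by exact_mod_cast hn
  -- first construction: labels are residues mod n
  obtain ⟨ℓ₀, h₀p, h₀c, h₀f, h₀card⟩ :=
    aux_construct G n hn k C ℓ (fun v => ℓ v % n) hℓ
      (fun v => by
        rw [ZMod.intCast_eq_intCast_iff']
        simp [Int.emod_emod_of_dvd])
      (Finset.Ico 0 (n : ℤ))
      (fun v => by
        simp only [Finset.mem_Ico]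
        exact ⟨Int.emod_nonneg _ hnz, Int.emod_lt_of_pos _ hnpos⟩)
  have h₀card' : (Set.range ℓ₀).ncard ≤ n * χ := by
    have : (Finset.Ico (0 : ℤ) (n : ℤ)).card = n := by
      rw [Int.card_Ico]
      simp
    rw [this] at h₀card
    exact h₀card
  -- the set of achievable cardinalities
  set P : Set ℕ := {c | ∃ ℓ' : V → ℤ, ProperLabeling G ℓ' ∧ ClosedColoring G n k ℓ' ∧
      (Set.range ℓ').Finite ∧ (Set.range ℓ').ncard = c} with hP
  have hPne : P.Nonempty := ⟨(Set.range ℓ₀).ncard, ℓ₀, h₀p, h₀c, h₀f, rfl⟩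
  refine ⟨sInf P, ⟨?_, ?_⟩, ?_, ?_⟩
  · exact Nat.sInf_mem hPne
  · intro ℓ' hp hc hf
    exact Nat.sInf_le ⟨ℓ', hp, hc, hf, rfl⟩
  · exact le_trans (Nat.sInf_le ⟨ℓ₀, h₀p, h₀c, h₀f, rfl⟩) h₀card'
  · intro hfin
    obtain ⟨ℓ₁, h₁p, h₁c, h₁f, h₁card⟩ :=
      aux_construct G n hn k C ℓ ℓ hℓ (fun v => rfl) hfin.toFinset
        (fun v => hfin.mem_toFinset.mpr ⟨v, rfl⟩)
    have : hfin.toFinset.card = (Set.range ℓ).ncard :=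
      (Set.ncard_eq_toFinset_card _ hfin).symm
    exact le_trans (Nat.sInf_le ⟨ℓ₁, h₁p, h₁c, h₁f, rfl⟩) (this ▸ h₁card)
end

section
/- If a graph G with finite chromatic number admits an independent efficient dominating set U, then for all k ∈ ℤ and n ∈ ℤ⁺, χ_{n,k}(G) exists and χ(G) ≤ χ_{n,k}(G) ≤ χ(G) + 1. -/
open SimpleGraph

def IsIEDS {V : Type*} (G : SimpleGraph V) (U : Set V) : Prop :=
  ∀ v : V, ∃! u : V, u ∈ U ∧ u ∈ insert v (G.neighborSet v)

private lemma modEq_sum_aux {α : Type*} {n : ℤ} (s : Finset α) {f g : α → ℤ}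
    (h : ∀ i ∈ s, f i ≡ g i [ZMOD n]) :
    (∑ i ∈ s, f i) ≡ (∑ i ∈ s, g i) [ZMOD n] := by
  classical
  induction s using Finset.induction_on with
  | empty => simp [Int.ModEq.refl]
  | @insert a s hx ih =>
    rw [Finset.sum_insert hx, Finset.sum_insert hx]
    exact (h a (Finset.mem_insert_self a s)).add
      (ih fun i hi => h i (Finset.mem_insert_of_mem hi))

private lemma chrom_le_ncard_aux {V : Type*} (G : SimpleGraph V) {ℓ : V → ℤ}
    (hp : ProperLabeling G ℓ) (hf : (Set.range ℓ).Finite) :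
    G.chromaticNumber ≤ ((Set.range ℓ).ncard : ℕ∞) := by
  haveI := hf.fintype
  let C : G.Coloring (Set.range ℓ) :=
    SimpleGraph.Coloring.mk (fun v => ⟨ℓ v, Set.mem_range_self v⟩)
      (fun {v w} h hvw => hp h (congrArg Subtype.val hvw))
  have h1 := (SimpleGraph.chromaticNumber_le_iff_colorable.mpr C.colorable)
  rwa [← Nat.card_coe_set_eq, Nat.card_eq_fintype_card]

theorem chi_of_IEDS {V : Type*} (G : SimpleGraph V) [G.LocallyFinite]
    (U : Set V) (hU : IsIEDS G U) (χ : ℕ) (hχ : G.chromaticNumber = χ)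
    (k : ℤ) (n : ℕ) (hn : 0 < n) :
    ∃ c : ℕ, HasClosedChrom G n k c ∧ χ ≤ c ∧ c ≤ χ + 1 := by
  classical
  obtain ⟨C⟩ : G.Colorable χ := SimpleGraph.chromaticNumber_le_iff_colorable.mp hχ.le
  have hnz : (0 : ℤ) < (n : ℤ) := by exact_mod_cast hn
  set nz : ℤ := (n : ℤ) with hnzdef
  set L : ℤ := nz * χ + k % nz with hL
  set ℓ : V → ℤ := fun v => if v ∈ U then L else nz * ((C v : ℕ) : ℤ) with hℓ
  -- basic facts
  have hrem0 : 0 ≤ k % nz := Int.emod_nonneg k hnz.ne'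
  have hlt : ∀ v : V, nz * ((C v : ℕ) : ℤ) < L := by
    intro v
    have h1 : ((C v : ℕ) : ℤ) < (χ : ℤ) := by exact_mod_cast (C v).isLt
    have : nz * ((C v : ℕ) : ℤ) < nz * χ := by
      exact mul_lt_mul_of_pos_left h1 hnz
    omega
  -- U is "independent": no neighbor of u ∈ U is in U
  have hind : ∀ u : V, u ∈ U → ∀ w : V, G.Adj u w → w ∉ U := by
    intro u hu w hadj hw
    obtain ⟨x, _, hx⟩ := hU u
    have h1 : u = x := hx u ⟨hu, Set.mem_insert u _⟩
    have h2 : w = x := hx w ⟨hw, Set.mem_insert_of_mem _ hadj⟩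
    exact G.ne_of_adj hadj (h1.trans h2.symm)
  -- properness
  have hp : ProperLabeling G ℓ := by
    intro v w hadj heq
    simp only [hℓ] at heq
    by_cases hv : v ∈ U <;> by_cases hw : w ∈ U <;> simp [hv, hw] at heq
    · exact hind v hv w hadj hw
    · exact absurd heq.symm (hlt w).ne
    · exact absurd heq (hlt v).ne
    · rcases heq with heq | heq
      · have : C v = C w := by
          apply Fin.ext
          exact_mod_cast heq
        exact C.valid hadj this
      · exact hnz.ne' heq
  -- mod facts per vertex
  have hLk : L ≡ k [ZMOD nz] := by
    have h1 : nz * (χ : ℤ) ≡ 0 [ZMOD nz] :=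
      Int.modEq_zero_iff_dvd.mpr ⟨_, rfl⟩
    have h2 : k % nz ≡ k [ZMOD nz] := Int.emod_emod_of_dvd k dvd_rfl
    have := h1.add h2
    rwa [zero_add] at this
  have hmod : ∀ w : V, ℓ w ≡ (if w ∈ U then k else 0) [ZMOD nz] := by
    intro w
    by_cases hw : w ∈ U
    · simpa [hℓ, hw] using hLk
    · simp only [hℓ, hw, if_neg, if_false]
      exact Int.modEq_zero_iff_dvd.mpr ⟨_, rfl⟩
  -- closed coloring
  have hc : ClosedColoring G n k ℓ := by
    intro v
    have hsum : (ℓ v + ∑ u ∈ G.neighborFinset v, ℓ u) ≡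
        ((if v ∈ U then k else 0) +
          ∑ u ∈ G.neighborFinset v, (if u ∈ U then k else 0)) [ZMOD nz] :=
      (hmod v).add (modEq_sum_aux _ fun i _ => hmod i)
    have hval : ((if v ∈ U then k else 0) +
        ∑ u ∈ G.neighborFinset v, (if u ∈ U then k else 0)) = k := by
      by_cases hv : v ∈ U
      · have : ∀ u ∈ G.neighborFinset v, (if u ∈ U then k else 0) = 0 := by
          intro u hu
          rw [SimpleGraph.mem_neighborFinset] at hu
          simp [hind v hv u hu]
        rw [Finset.sum_congr rfl this]
        simp [hv]
      · obtain ⟨u₀, ⟨hu₀U, hu₀mem⟩, huniq⟩ := hU v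
        have hne : u₀ ≠ v := fun h => hv (h ▸ hu₀U)
        have hu₀nb : u₀ ∈ G.neighborFinset v := by
          rw [SimpleGraph.mem_neighborFinset]
          rcases Set.mem_insert_iff.mp hu₀mem with h | h
          · exact absurd h hne
          · exact h
        have hsum2 : (∑ u ∈ G.neighborFinset v, (if u ∈ U then k else 0)) = k := by
          rw [Finset.sum_eq_single_of_mem u₀ hu₀nb]
          · simp [hu₀U]
          · intro b hb hbne
            rw [SimpleGraph.mem_neighborFinset] at hb
            have : b ∉ U := fun hbU =>
              hbne (huniq b ⟨hbU, Set.mem_insert_of_mem _ hb⟩)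
            simp [this]
        rw [hsum2]
        simp [hv]
    exact hval ▸ hsum
  -- range bound
  set T : Finset ℤ := insert L ((Finset.range χ).image (fun i : ℕ => nz * i)) with hT
  have hsub : Set.range ℓ ⊆ ↑T := by
    rintro x ⟨v, rfl⟩
    simp only [hℓ]
    by_cases hv : v ∈ U
    · simp [hT, hv]
    · simp only [hv, if_neg, if_false]
      apply Finset.mem_coe.mpr
      apply Finset.mem_insert_of_mem
      exact Finset.mem_image.mpr ⟨(C v : ℕ), Finset.mem_range.mpr (C v).isLt, rfl⟩
  have hfin : (Set.range ℓ).Finite := Set.Finite.subset T.finite_toSet hsub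
  have hcard : (Set.range ℓ).ncard ≤ χ + 1 := by
    have h1 : (Set.range ℓ).ncard ≤ (↑T : Set ℤ).ncard :=
      Set.ncard_le_ncard hsub T.finite_toSet
    rw [Set.ncard_coe_finset] at h1
    have h2 : T.card ≤ ((Finset.range χ).image (fun i : ℕ => nz * i)).card + 1 :=
      Finset.card_insert_le _ _
    have h3 : ((Finset.range χ).image (fun i : ℕ => nz * i)).card ≤ χ := by
      calc ((Finset.range χ).image (fun i : ℕ => nz * i)).card
          ≤ (Finset.range χ).card := Finset.card_image_le
        _ = χ := Finset.card_range χ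
    omega
  -- extract minimum
  have hP : ∃ m : ℕ, ∃ ℓ' : V → ℤ, ProperLabeling G ℓ' ∧ ClosedColoring G n k ℓ' ∧
      (Set.range ℓ').Finite ∧ (Set.range ℓ').ncard = m :=
    ⟨(Set.range ℓ).ncard, ℓ, hp, hc, hfin, rfl⟩
  refine ⟨Nat.find hP, ⟨Nat.find_spec hP, ?_⟩, ?_, ?_⟩
  · intro ℓ' h1 h2 h3
    exact Nat.find_min' hP ⟨ℓ', h1, h2, h3, rfl⟩
  · obtain ⟨ℓ', hp', _, hf', hcard'⟩ := Nat.find_spec hP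
    have := chrom_le_ncard_aux G hp' hf'
    rw [hχ, hcard'] at this
    exact_mod_cast this
  · exact le_trans (Nat.find_min' hP ⟨ℓ, hp, hc, hfin, rfl⟩) hcard
end

section
/- For all k ∈ ℤ and n, m ∈ ℤ⁺ with k ≢ 0 (mod n), the path graph P_m satisfies χ_{n,k}(P_2) = χ_{n,k}(P_3) = 2, and χ_{n,k}(P_m) = 3 for all m ≥ 4. -/
open SimpleGraph

noncomputable instance (m : ℕ) : (pathGraph m).LocallyFinite :=
  fun _ => (Set.toFinite _).fintype

lemma pathGraph_nbr {m : ℕ} (hm : 2 ≤ m) (v : Fin m) :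
    (pathGraph m).neighborFinset v =
      if h0 : v.val = 0 then {(⟨1, by omega⟩ : Fin m)}
      else if h1 : v.val = m - 1 then {(⟨m - 2, by omega⟩ : Fin m)}
      else {(⟨v.val - 1, by have := v.isLt; omega⟩ : Fin m),
            (⟨v.val + 1, by have := v.isLt; omega⟩ : Fin m)} := by
  have hv := v.isLt
  ext u
  have hu := u.isLt
  simp only [mem_neighborFinset, pathGraph_adj]
  split_ifs with h0 h1 <;> simp [Fin.ext_iff] <;> omega

lemma closedSum' {m : ℕ} (hm : 2 ≤ m) (ℓ : Fin m → ℤ) (g : ℕ → ℤ)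
    (hgl : ∀ v : Fin m, ℓ v = g v.val) (v : Fin m) :
    ℓ v + ∑ u ∈ (pathGraph m).neighborFinset v, ℓ u =
      if v.val = 0 then g 0 + g 1
      else if v.val = m - 1 then g (m - 2) + g (m - 1)
      else g (v.val - 1) + g v.val + g (v.val + 1) := by
  have hv := v.isLt
  simp only [hgl]
  rw [pathGraph_nbr hm v]
  split_ifs with h0 h1
  · simp [h0]
  · simp [h1]; ring
  · rw [Finset.sum_pair (by simp [Fin.ext_iff])]
    ring

lemma proper_of_pattern {m : ℕ} (ℓ : Fin m → ℤ) (g : ℕ → ℤ)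
    (hgl : ∀ v : Fin m, ℓ v = g v.val)
    (h : ∀ i : ℕ, i + 1 < m → g i ≠ g (i + 1)) :
    ProperLabeling (pathGraph m) ℓ := by
  intro v w hadj
  rw [pathGraph_adj] at hadj
  rw [hgl v, hgl w]
  rcases hadj with h1 | h1
  · rw [← h1]
    exact h v.val (by have := w.isLt; omega)
  · rw [← h1]
    exact (h w.val (by have := v.isLt; omega)).symm

lemma three_le_ncard {S : Set ℤ} (hS : S.Finite) {x y z : ℤ}
    (hx : x ∈ S) (hy : y ∈ S) (hz : z ∈ S)
    (hxy : x ≠ y) (hyz : y ≠ z) (hxz : x ≠ z) : 3 ≤ S.ncard := by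
  have hsub : ({x, y, z} : Set ℤ) ⊆ S := by
    intro w hw
    simp only [Set.mem_insert_iff, Set.mem_singleton_iff] at hw
    rcases hw with rfl | rfl | rfl <;> assumption
  calc (3 : ℕ) = ({x, y, z} : Set ℤ).ncard := by
        rw [Set.ncard_insert_of_notMem (by simp [hxy, hxz]), Set.ncard_pair hyz]
    _ ≤ S.ncard := Set.ncard_le_ncard hsub hS

lemma two_le_ncard {S : Set ℤ} (hS : S.Finite) {x y : ℤ}
    (hx : x ∈ S) (hy : y ∈ S) (hxy : x ≠ y) : 2 ≤ S.ncard := by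
  have hsub : ({x, y} : Set ℤ) ⊆ S := by
    intro w hw
    simp only [Set.mem_insert_iff, Set.mem_singleton_iff] at hw
    rcases hw with rfl | rfl <;> assumption
  calc (2 : ℕ) = ({x, y} : Set ℤ).ncard := (Set.ncard_pair hxy).symm
    _ ≤ S.ncard := Set.ncard_le_ncard hsub hS

/-- The 3-periodic pattern. -/
def pat (a b c : ℤ) (i : ℕ) : ℤ :=
  if i % 3 = 0 then a else if i % 3 = 1 then b else c

lemma pat_construct {m : ℕ} (hm : 4 ≤ m) (n k a b c : ℤ)
    (hab : a ≠ b) (hbc : b ≠ c) (hac : a ≠ c)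
    (h01 : a + b ≡ k [ZMOD n]) (h012 : a + b + c ≡ k [ZMOD n])
    (hend : pat a b c (m - 2) + pat a b c (m - 1) ≡ k [ZMOD n]) :
    ∃ ℓ : Fin m → ℤ, ProperLabeling (pathGraph m) ℓ ∧ ClosedColoring (pathGraph m) n k ℓ ∧
      (Set.range ℓ).Finite ∧ (Set.range ℓ).ncard = 3 := by
  refine ⟨fun v => pat a b c v.val, ?_, ?_, Set.finite_range _, ?_⟩
  · refine proper_of_pattern _ (pat a b c) (fun _ => rfl) ?_
    intro i _
    have h3 : i % 3 = 0 ∨ i % 3 = 1 ∨ i % 3 = 2 := by omega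
    rcases h3 with h | h | h
    · have h' : (i + 1) % 3 = 1 := by omega
      simp [pat, h, h', hab]
    · have h' : (i + 1) % 3 = 2 := by omega
      simp [pat, h, h', hbc]
    · have h' : (i + 1) % 3 = 0 := by omega
      simp [pat, h, h', (Ne.symm hac)]
  · intro v
    rw [closedSum' (by omega) _ (pat a b c) (fun _ => rfl) v]
    have hv := v.isLt
    split_ifs with h0 h1
    · simpa [pat] using h01
    · exact hend
    · have h3 : v.val % 3 = 0 ∨ v.val % 3 = 1 ∨ v.val % 3 = 2 := by omega
      have hv1 : 0 < v.val := by omega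
      rcases h3 with h | h | h
      · have e1 : (v.val - 1) % 3 = 2 := by omega
        have e2 : (v.val + 1) % 3 = 1 := by omega
        have : pat a b c (v.val - 1) + pat a b c v.val + pat a b c (v.val + 1)
            = a + b + c := by simp [pat, e1, e2, h]; ring
        rw [this]; exact h012
      · have e1 : (v.val - 1) % 3 = 0 := by omega
        have e2 : (v.val + 1) % 3 = 2 := by omega
        have : pat a b c (v.val - 1) + pat a b c v.val + pat a b c (v.val + 1)
            = a + b + c := by simp [pat, e1, e2, h]
        rw [this]; exact h012
      · have e1 : (v.val - 1) % 3 = 1 := by omega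
        have e2 : (v.val + 1) % 3 = 0 := by omega
        have : pat a b c (v.val - 1) + pat a b c v.val + pat a b c (v.val + 1)
            = a + b + c := by simp [pat, e1, e2, h]; ring
        rw [this]; exact h012
  · have hrange : Set.range (fun v : Fin m => pat a b c v.val) = {a, b, c} := by
      ext x
      constructor
      · rintro ⟨i, rfl⟩
        simp only [pat]
        split_ifs <;> simp
      · intro hx
        simp only [Set.mem_insert_iff, Set.mem_singleton_iff] at hx
        rcases hx with rfl | rfl | rfl
        · exact ⟨⟨0, by omega⟩, by simp [pat]⟩
        · exact ⟨⟨1, by omega⟩, by simp [pat]⟩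
        · exact ⟨⟨2, by omega⟩, by simp [pat]⟩
    rw [hrange, Set.ncard_insert_of_notMem (by simp [hab, hac]), Set.ncard_pair hbc]

theorem chi_pathGraph (k : ℤ) (n : ℕ) (hn : 0 < n) (hk : ¬ (n : ℤ) ∣ k) :
    HasClosedChrom (pathGraph 2) n k 2 ∧ HasClosedChrom (pathGraph 3) n k 2 ∧
      ∀ m : ℕ, 4 ≤ m → HasClosedChrom (pathGraph m) n k 3 := by
  have hk0 : k ≠ 0 := fun h => hk (h ▸ dvd_zero _)
  have hkn : k ≠ (n : ℤ) := fun h => hk (h ▸ dvd_refl _)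
  have hn0 : (n : ℤ) ≠ 0 := by exact_mod_cast hn.ne'
  have hmodn : (n : ℤ) ≡ 0 [ZMOD (n : ℤ)] := Int.modEq_zero_iff_dvd.mpr dvd_rfl
  have hkk : k ≡ k [ZMOD (n : ℤ)] := Int.ModEq.refl k
  -- the degenerate pattern for paths of length 2 and 3
  set g2 : ℕ → ℤ := fun i => if i = 1 then k else 0 with hg2
  refine ⟨⟨⟨fun v => g2 v.val, ?_, ?_, Set.finite_range _, ?_⟩, ?_⟩,
    ⟨⟨fun v => g2 v.val, ?_, ?_, Set.finite_range _, ?_⟩, ?_⟩, ?_⟩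
  -- P2 proper
  · refine proper_of_pattern _ g2 (fun _ => rfl) ?_
    intro i hi
    have : i = 0 := by omega
    subst this
    simp [hg2, hk0, Ne.symm hk0]
  -- P2 coloring
  · intro v
    rw [closedSum' (by omega) _ g2 (fun _ => rfl) v]
    have hv := v.isLt
    split_ifs with h0 h1
    · simpa [hg2] using hkk
    · simpa [hg2] using hkk
    · omega
  -- P2 ncard
  · have hrange : Set.range (fun v : Fin 2 => g2 v.val) = {0, k} := by
      ext x
      constructor
      · rintro ⟨i, rfl⟩
        fin_cases i <;> simp [hg2]
      · intro hx
        simp only [Set.mem_insert_iff, Set.mem_singleton_iff] at hx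
        rcases hx with rfl | rfl
        · exact ⟨⟨0, by omega⟩, by simp [hg2]⟩
        · exact ⟨⟨1, by omega⟩, by simp [hg2]⟩
    rw [hrange, Set.ncard_pair (Ne.symm hk0)]
  -- P2 lower bound
  · intro ℓ hp _ hf
    have hadj : (pathGraph 2).Adj ⟨0, by omega⟩ ⟨1, by omega⟩ := by
      simp [pathGraph_adj]
    exact two_le_ncard hf ⟨_, rfl⟩ ⟨_, rfl⟩ (hp hadj)
  -- P3 proper
  · refine proper_of_pattern _ g2 (fun _ => rfl) ?_
    intro i hi
    have : i = 0 ∨ i = 1 := by omega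
    rcases this with rfl | rfl <;> simp [hg2, hk0, Ne.symm hk0]
  -- P3 coloring
  · intro v
    rw [closedSum' (by omega) _ g2 (fun _ => rfl) v]
    have hv := v.isLt
    split_ifs with h0 h1
    · simpa [hg2] using hkk
    · simpa [hg2] using hkk
    · have : v.val = 1 := by omega
      rw [this]
      simpa [hg2] using hkk
  -- P3 ncard
  · have hrange : Set.range (fun v : Fin 3 => g2 v.val) = {0, k} := by
      ext x
      constructor
      · rintro ⟨i, rfl⟩
        fin_cases i <;> simp [hg2]
      · intro hx
        simp only [Set.mem_insert_iff, Set.mem_singleton_iff] at hx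
        rcases hx with rfl | rfl
        · exact ⟨⟨0, by omega⟩, by simp [hg2]⟩
        · exact ⟨⟨1, by omega⟩, by simp [hg2]⟩
    rw [hrange, Set.ncard_pair (Ne.symm hk0)]
  -- P3 lower bound
  · intro ℓ hp _ hf
    have hadj : (pathGraph 3).Adj ⟨0, by omega⟩ ⟨1, by omega⟩ := by
      simp [pathGraph_adj]
    exact two_le_ncard hf ⟨_, rfl⟩ ⟨_, rfl⟩ (hp hadj)
  -- P_m, m ≥ 4
  · intro m hm
    constructor
    · -- existence: split on m % 3
      have hknk : k + (n : ℤ) ≡ k [ZMOD (n : ℤ)] := by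
        simpa using hkk.add hmodn
      by_cases h3 : m % 3 = 0
      · refine pat_construct hm n k 0 k n (Ne.symm hk0) hkn (by exact_mod_cast hn.ne) ?_ ?_ ?_
        · simpa using hkk
        · simpa [add_comm] using hknk
        · have e1 : (m - 2) % 3 = 1 := by omega
          have e2 : (m - 1) % 3 = 2 := by omega
          simpa [pat, e1, e2] using hknk
      · refine pat_construct hm n k k 0 n hk0 (Ne.symm hn0) hkn ?_ ?_ ?_
        · simpa using hkk
        · simpa using hknk
        · by_cases h3' : m % 3 = 1
          · have e1 : (m - 2) % 3 = 2 := by omega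
            have e2 : (m - 1) % 3 = 0 := by omega
            simpa [pat, e1, e2, add_comm] using hknk
          · have e1 : (m - 2) % 3 = 0 := by omega
            have e2 : (m - 1) % 3 = 1 := by omega
            simpa [pat, e1, e2] using hkk
    · -- lower bound 3
      intro ℓ hp hc hf
      set g : ℕ → ℤ := fun i => if h : i < m then ℓ ⟨i, h⟩ else 0 with hg
      have hgl : ∀ v : Fin m, ℓ v = g v.val := by
        intro v
        simp [hg, v.isLt]
      have hadj : ∀ i : ℕ, (h : i + 1 < m) →
          (pathGraph m).Adj ⟨i, by omega⟩ ⟨i + 1, h⟩ := by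
        intro i h
        simp [pathGraph_adj]
      have d01 : g 0 ≠ g 1 := by
        have := hp (hadj 0 (by omega))
        rwa [hgl, hgl] at this
      have d12 : g 1 ≠ g 2 := by
        have := hp (hadj 1 (by omega))
        rwa [hgl, hgl] at this
      have d23 : g 2 ≠ g 3 := by
        have := hp (hadj 2 (by omega))
        rwa [hgl, hgl] at this
      have hmem : ∀ i : ℕ, (h : i < m) → g i ∈ Set.range ℓ := by
        intro i h
        exact ⟨⟨i, h⟩, (hgl ⟨i, h⟩)⟩
      by_cases hA : g 2 = g 0
      · by_cases hB : g 3 = g 1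
        · -- contradiction with k not divisible by n
          exfalso
          have s0 := hc ⟨0, by omega⟩
          rw [closedSum' (by omega) _ g hgl] at s0
          simp only [if_pos rfl] at s0
          have s1 := hc ⟨1, by omega⟩
          rw [closedSum' (by omega) _ g hgl] at s1
          rw [if_neg (show ¬(1 = m - 1) by omega)] at s1
          norm_num at s1
          have s2 := hc ⟨2, by omega⟩
          rw [closedSum' (by omega) _ g hgl] at s2
          rw [if_neg (show ¬(2 = m - 1) by omega)] at s2
          norm_num at s2
          have d0 : (n : ℤ) ∣ k - (g 0 + g 1) := s0.dvd
          have d1 : (n : ℤ) ∣ k - (g 0 + g 1 + g 2) := s1.dvd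
          have d2 : (n : ℤ) ∣ k - (g 1 + g 2 + g 3) := s2.dvd
          apply hk
          have hdvd : (n : ℤ) ∣ (k - (g 0 + g 1)) * 3 - (k - (g 0 + g 1 + g 2))
              - (k - (g 1 + g 2 + g 3)) := (Dvd.dvd.sub (d0.mul_right 3) d1).sub d2
          have heq : (k - (g 0 + g 1)) * 3 - (k - (g 0 + g 1 + g 2))
              - (k - (g 1 + g 2 + g 3)) = k := by rw [hA, hB]; ring
          rwa [heq] at hdvd
        · exact three_le_ncard hf (hmem 1 (by omega)) (hmem 2 (by omega))
            (hmem 3 (by omega)) d12 d23 (Ne.symm hB)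
      · exact three_le_ncard hf (hmem 0 (by omega)) (hmem 1 (by omega))
          (hmem 2 (by omega)) d01 d12 (Ne.symm hA)
end

section
/- For a path on m ≥ 4 vertices, there is no proper closed coloring with remainder k mod n using only 2 distinct labels when k ≢ 0 (mod n). -/
open SimpleGraph

theorem no_two_coloring_path (k : ℤ) (n m : ℕ) (hn : 0 < n) (hk : ¬ (n : ℤ) ∣ k)
    (hm : 4 ≤ m) :
    ¬ ∃ ℓ : Fin m → ℤ, ProperLabeling (pathGraph m) ℓ ∧
      ClosedColoring (pathGraph m) n k ℓ ∧ (Set.range ℓ).ncard = 2 := by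
  rintro ⟨ℓ, hprop, hclosed, hcard⟩
  set v0 : Fin m := ⟨0, by omega⟩
  set v1 : Fin m := ⟨1, by omega⟩
  set v2 : Fin m := ⟨2, by omega⟩
  set v3 : Fin m := ⟨3, by omega⟩
  have hN0 : (pathGraph m).neighborFinset v0 = {v1} := by
    ext u
    simp only [mem_neighborFinset, pathGraph_adj, Finset.mem_singleton,
      Fin.ext_iff, v0, v1]
    omega
  have hN1 : (pathGraph m).neighborFinset v1 = {v0, v2} := by
    ext u
    simp only [mem_neighborFinset, pathGraph_adj, Finset.mem_insert,
      Finset.mem_singleton, Fin.ext_iff, v0, v1, v2]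
    omega
  have hN2 : (pathGraph m).neighborFinset v2 = {v1, v3} := by
    ext u
    simp only [mem_neighborFinset, pathGraph_adj, Finset.mem_insert,
      Finset.mem_singleton, Fin.ext_iff, v1, v2, v3]
    omega
  have h01 : (pathGraph m).Adj v0 v1 := by simp [pathGraph_adj, v0, v1]
  have h12 : (pathGraph m).Adj v1 v2 := by simp [pathGraph_adj, v1, v2]
  have h23 : (pathGraph m).Adj v2 v3 := by simp [pathGraph_adj, v2, v3]
  -- with only two labels, ℓ v2 = ℓ v0 and ℓ v3 = ℓ v1
  obtain ⟨a, b, hab, hS⟩ := Set.ncard_eq_two.mp hcard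
  have hmem : ∀ i : Fin m, ℓ i = a ∨ ℓ i = b := by
    intro i
    have : ℓ i ∈ Set.range ℓ := ⟨i, rfl⟩
    rw [hS] at this
    simpa using this
  have h20 : ℓ v2 = ℓ v0 := by
    have n01 := hprop h01
    have n12 := hprop h12
    rcases hmem v0 with h0 | h0 <;> rcases hmem v1 with h1 | h1 <;>
      rcases hmem v2 with h2 | h2 <;> simp_all
  have h31 : ℓ v3 = ℓ v1 := by
    have n12 := hprop h12
    have n23 := hprop h23
    rcases hmem v1 with h1 | h1 <;> rcases hmem v2 with h2 | h2 <;>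
      rcases hmem v3 with h3 | h3 <;> simp_all
  have c0 := hclosed v0
  have c1 := hclosed v1
  have c2 := hclosed v2
  rw [hN0, Finset.sum_singleton] at c0
  rw [hN1, Finset.sum_pair (by simp [Fin.ext_iff, v0, v2])] at c1
  rw [hN2, Finset.sum_pair (by simp [Fin.ext_iff, v1, v3])] at c2
  rw [h20] at c1 c2
  rw [h31] at c2
  -- c0 : ℓ v0 + ℓ v1 ≡ k, c1 : ℓ v1 + (ℓ v0 + ℓ v0) ≡ k, c2 : ℓ v0 + (ℓ v1 + ℓ v1) ≡ k
  have d1 : (n : ℤ) ∣ ℓ v0 := by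
    have h := (c0.trans c1.symm).dvd
    have e : ℓ v1 + (ℓ v0 + ℓ v0) - (ℓ v0 + ℓ v1) = ℓ v0 := by ring
    rwa [e] at h
  have d2 : (n : ℤ) ∣ ℓ v1 := by
    have h := (c0.trans c2.symm).dvd
    have e : ℓ v0 + (ℓ v1 + ℓ v1) - (ℓ v0 + ℓ v1) = ℓ v1 := by ring
    rwa [e] at h
  have : (n : ℤ) ∣ k := by
    have hd : (n : ℤ) ∣ (ℓ v0 + ℓ v1) := dvd_add d1 d2
    have h := dvd_add c0.dvd hd
    have e : k - (ℓ v0 + ℓ v1) + (ℓ v0 + ℓ v1) = k := by ring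
    rwa [e] at h
  exact hk this
end

section
/- Let k ∈ ℤ and i, j, n ∈ ℤ⁺. The complete bipartite graph K_{i,j} admits a closed coloring with remainder k mod n if and only if gcd(ij − 1, n) divides (j − 1)k; in that case χ_{n,k}(K_{i,j}) = 2. -/
open SimpleGraph

noncomputable instance (i j : ℕ) : (completeBipartiteGraph (Fin i) (Fin j)).LocallyFinite :=
  fun _ => (Set.toFinite _).fintype

lemma nb_left (i j : ℕ) (v : Fin i) :
    (completeBipartiteGraph (Fin i) (Fin j)).neighborFinset (Sum.inl v) =
      Finset.univ.map ⟨Sum.inr, Sum.inr_injective⟩ := by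
  ext u
  cases u <;> simp [mem_neighborFinset]

lemma nb_right (i j : ℕ) (u : Fin j) :
    (completeBipartiteGraph (Fin i) (Fin j)).neighborFinset (Sum.inr u) =
      Finset.univ.map ⟨Sum.inl, Sum.inl_injective⟩ := by
  ext w
  cases w <;> simp [mem_neighborFinset]

lemma sum_left (i j : ℕ) (v : Fin i) (ℓ : Fin i ⊕ Fin j → ℤ) :
    ∑ u ∈ (completeBipartiteGraph (Fin i) (Fin j)).neighborFinset (Sum.inl v), ℓ u =
      ∑ u : Fin j, ℓ (Sum.inr u) := by
  rw [nb_left, Finset.sum_map]; rfl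

lemma sum_right (i j : ℕ) (u : Fin j) (ℓ : Fin i ⊕ Fin j → ℤ) :
    ∑ w ∈ (completeBipartiteGraph (Fin i) (Fin j)).neighborFinset (Sum.inr u), ℓ w =
      ∑ w : Fin i, ℓ (Sum.inl w) := by
  rw [nb_right, Finset.sum_map]; rfl

theorem chi_completeBipartite (k : ℤ) (i j n : ℕ) (hi : 0 < i) (hj : 0 < j) (hn : 0 < n) :
    ((∃ ℓ, ClosedColoring (completeBipartiteGraph (Fin i) (Fin j)) n k ℓ) ↔
        (Int.gcd ((i : ℤ) * j - 1) n : ℤ) ∣ ((j : ℤ) - 1) * k) ∧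
      ((Int.gcd ((i : ℤ) * j - 1) n : ℤ) ∣ ((j : ℤ) - 1) * k →
        HasClosedChrom (completeBipartiteGraph (Fin i) (Fin j)) n k 2) := by
  -- Forward: coloring → divisibility
  have fwd : (∃ ℓ, ClosedColoring (completeBipartiteGraph (Fin i) (Fin j)) n k ℓ) →
      (Int.gcd ((i : ℤ) * j - 1) n : ℤ) ∣ ((j : ℤ) - 1) * k := by
    rintro ⟨ℓ, hℓ⟩
    -- work in ZMod n
    have h1 : ∀ v : Fin i, ((ℓ (Sum.inl v) : ZMod n) + ∑ u : Fin j, (ℓ (Sum.inr u) : ZMod n)) = (k : ZMod n) := by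
      intro v
      have := (ZMod.intCast_eq_intCast_iff _ _ _).2 (hℓ (Sum.inl v))
      rw [sum_left] at this
      push_cast at this ⊢
      exact this
    have h2 : ∀ u : Fin j, ((ℓ (Sum.inr u) : ZMod n) + ∑ w : Fin i, (ℓ (Sum.inl w) : ZMod n)) = (k : ZMod n) := by
      intro u
      have := (ZMod.intCast_eq_intCast_iff _ _ _).2 (hℓ (Sum.inr u))
      rw [sum_right] at this
      push_cast at this ⊢
      exact this
    set a : ZMod n := (ℓ (Sum.inl ⟨0, hi⟩) : ZMod n) with ha
    set b : ZMod n := (ℓ (Sum.inr ⟨0, hj⟩) : ZMod n) with hb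
    have hla : ∀ v : Fin i, (ℓ (Sum.inl v) : ZMod n) = a := by
      intro v
      have := (h1 v).trans (h1 ⟨0, hi⟩).symm
      exact add_right_cancel this
    have hlb : ∀ u : Fin j, (ℓ (Sum.inr u) : ZMod n) = b := by
      intro u
      have := (h2 u).trans (h2 ⟨0, hj⟩).symm
      exact add_right_cancel this
    have hA : (∑ w : Fin i, (ℓ (Sum.inl w) : ZMod n)) = (i : ZMod n) * a := by
      simp only [hla]; simp [Finset.sum_const, mul_comm]
    have hB : (∑ u : Fin j, (ℓ (Sum.inr u) : ZMod n)) = (j : ZMod n) * b := by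
      simp only [hlb]; simp [Finset.sum_const, mul_comm]
    have e1 : a + (j : ZMod n) * b = (k : ZMod n) := by rw [← hB]; exact h1 ⟨0, hi⟩
    have e2 : b + (i : ZMod n) * a = (k : ZMod n) := by rw [← hA]; exact h2 ⟨0, hj⟩
    have key : ((i : ℤ) * j - 1) * (ℓ (Sum.inl ⟨0, hi⟩)) ≡ ((j : ℤ) - 1) * k [ZMOD (n : ℤ)] := by
      rw [← ZMod.intCast_eq_intCast_iff]
      push_cast
      rw [← ha]
      linear_combination (j : ZMod n) * e2 - e1
    have hnd : (n : ℤ) ∣ ((i : ℤ) * j - 1) * (ℓ (Sum.inl ⟨0, hi⟩)) - ((j : ℤ) - 1) * k :=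
      Int.ModEq.dvd key.symm
    have g1 : (Int.gcd ((i : ℤ) * j - 1) n : ℤ) ∣ ((i : ℤ) * j - 1) := Int.gcd_dvd_left _ _
    have g2 : (Int.gcd ((i : ℤ) * j - 1) n : ℤ) ∣ (n : ℤ) := Int.gcd_dvd_right _ _
    have : (Int.gcd ((i : ℤ) * j - 1) n : ℤ) ∣
        ((i : ℤ) * j - 1) * (ℓ (Sum.inl ⟨0, hi⟩)) - (((i : ℤ) * j - 1) * (ℓ (Sum.inl ⟨0, hi⟩)) - ((j : ℤ) - 1) * k) :=
      dvd_sub (g1.mul_right _) (g2.trans hnd)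
    simpa using this
  -- Backward: divisibility → a 2-label coloring exists
  have bwd : (Int.gcd ((i : ℤ) * j - 1) n : ℤ) ∣ ((j : ℤ) - 1) * k →
      ∃ ℓ, ProperLabeling (completeBipartiteGraph (Fin i) (Fin j)) ℓ ∧
        ClosedColoring (completeBipartiteGraph (Fin i) (Fin j)) n k ℓ ∧
        (Set.range ℓ).Finite ∧ (Set.range ℓ).ncard = 2 := by
    intro hd
    obtain ⟨t, ht⟩ := hd
    have hbez := Int.gcd_eq_gcd_ab ((i : ℤ) * j - 1) n
    set m : ℤ := (i : ℤ) * j - 1 with hm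
    set a : ℤ := Int.gcdA m n * t with hx
    have hsolve : (n : ℤ) ∣ m * a - ((j : ℤ) - 1) * k := by
      refine ⟨-(Int.gcdB m n * t), ?_⟩
      rw [ht, hbez]
      ring
    set b₀ : ℤ := k - i * a with hb0
    set b : ℤ := if b₀ = a then b₀ + n else b₀ with hbdef
    have hab : a ≠ b := by
      rw [hbdef]
      by_cases h : b₀ = a
      · rw [if_pos h, h]; omega
      · rw [if_neg h]; exact fun hc => h hc.symm
    have hbmod : b ≡ b₀ [ZMOD (n : ℤ)] := by
      by_cases h : b₀ = a
      · simp only [hbdef, if_pos h]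
        exact Int.ModEq.symm (Int.modEq_iff_dvd.2 ⟨1, by ring⟩)
      · simp only [hbdef, if_neg h]
        exact Int.ModEq.refl _
    set ℓ : Fin i ⊕ Fin j → ℤ := Sum.elim (fun _ => a) (fun _ => b) with hℓdef
    have hrange : Set.range ℓ = {a, b} := by
      haveI : Nonempty (Fin i) := ⟨⟨0, hi⟩⟩
      haveI : Nonempty (Fin j) := ⟨⟨0, hj⟩⟩
      rw [hℓdef, Set.Sum.elim_range, Set.range_const, Set.range_const, Set.singleton_union]
    refine ⟨ℓ, ?_, ?_, ?_, ?_⟩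
    · rintro (v | v) (w | w) hvw
      · exact absurd hvw (by simp)
      · exact hab
      · exact hab.symm
      · exact absurd hvw (by simp)
    · rintro (v | v)
      · show ℓ (Sum.inl v) + _ ≡ k [ZMOD (n : ℤ)]
        rw [sum_left]
        have hsum : ∑ u : Fin j, ℓ (Sum.inr u) = j * b := by
          simp only [hℓdef, Sum.elim_inr, Finset.sum_const, Finset.card_univ, Fintype.card_fin,
            nsmul_eq_mul]
        rw [hsum]
        show a + (j : ℤ) * b ≡ k [ZMOD (n : ℤ)]
        have step1 : a + (j : ℤ) * b ≡ a + (j : ℤ) * b₀ [ZMOD (n : ℤ)] :=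
          (hbmod.mul_left _).add_left _
        have step2 : a + (j : ℤ) * b₀ ≡ k [ZMOD (n : ℤ)] := by
          refine Int.modEq_iff_dvd.2 ?_
          have : k - (a + (j : ℤ) * b₀) = m * a - ((j : ℤ) - 1) * k := by
            rw [hb0, hm]; ring
          rw [this]
          exact hsolve
        exact step1.trans step2
      · show ℓ (Sum.inr v) + _ ≡ k [ZMOD (n : ℤ)]
        rw [sum_right]
        have hsum : ∑ u : Fin i, ℓ (Sum.inl u) = i * a := by
          simp only [hℓdef, Sum.elim_inl, Finset.sum_const, Finset.card_univ, Fintype.card_fin,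
            nsmul_eq_mul]
        rw [hsum]
        show b + (i : ℤ) * a ≡ k [ZMOD (n : ℤ)]
        have : b₀ + (i : ℤ) * a = k := by rw [hb0]; ring
        calc b + (i : ℤ) * a ≡ b₀ + (i : ℤ) * a [ZMOD (n : ℤ)] := hbmod.add_right _
          _ = k := this
    · rw [hrange]; exact Set.toFinite _
    · rw [hrange]; exact Set.ncard_pair hab
  have lb : ∀ ℓ, ProperLabeling (completeBipartiteGraph (Fin i) (Fin j)) ℓ →
      ClosedColoring (completeBipartiteGraph (Fin i) (Fin j)) n k ℓ →
      (Set.range ℓ).Finite → 2 ≤ (Set.range ℓ).ncard := by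
    intro ℓ hp _ hfin
    have hadj : (completeBipartiteGraph (Fin i) (Fin j)).Adj (Sum.inl ⟨0, hi⟩) (Sum.inr ⟨0, hj⟩) := by
      simp
    exact (Set.one_lt_ncard_iff hfin).2 ⟨_, _, ⟨_, rfl⟩, ⟨_, rfl⟩, hp hadj⟩
  refine ⟨⟨fwd, fun hd => ?_⟩, fun hd => ⟨bwd hd, lb⟩⟩
  obtain ⟨ℓ, _, hc, _, _⟩ := bwd hd
  exact ⟨ℓ, hc⟩
end

section
/- Let G be a j-regular graph. If gcd(j + 1, n) divides k, then χ_{n,k}(G) = χ(G). If G is finite and gcd(j + 1, n) does not divide k·|V(G)|, then no closed coloring with remainder k mod n of G exists. -/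
open SimpleGraph

/-- Any proper labeling with finite range gives at least `χ(G)` labels. -/
lemma chrom_le_ncard {V : Type*} (G : SimpleGraph V) (c : ℕ)
    (hc : G.chromaticNumber = c) (ℓ : V → ℤ) (hp : ProperLabeling G ℓ)
    (hfin : (Set.range ℓ).Finite) : c ≤ (Set.range ℓ).ncard := by
  haveI : Fintype (Set.range ℓ) := hfin.fintype
  have C : G.Coloring (Set.range ℓ) :=
    SimpleGraph.Coloring.mk (fun v => ⟨ℓ v, ⟨v, rfl⟩⟩)
      (fun {v w} h => by simpa [Subtype.ext_iff] using hp h)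
  have hcol : G.Colorable (Fintype.card (Set.range ℓ)) := C.colorable
  have h1 : G.chromaticNumber ≤ (Fintype.card (Set.range ℓ) : ℕ∞) :=
    SimpleGraph.chromaticNumber_le_iff_colorable.2 hcol
  have h2 : Fintype.card (Set.range ℓ) = (Set.range ℓ).ncard := by
    rw [← Nat.card_coe_set_eq, Nat.card_eq_fintype_card]
  rw [hc, h2] at h1
  exact_mod_cast h1

theorem chi_regular {V : Type*} (G : SimpleGraph V) [G.LocallyFinite]
    (j : ℕ) (hreg : G.IsRegularOfDegree j) (n : ℕ) (hn : 0 < n) (k : ℤ) :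
    ((Int.gcd ((j : ℤ) + 1) n : ℤ) ∣ k →
      ∀ c : ℕ, G.chromaticNumber = c → HasClosedChrom G n k c) ∧
    (∀ _ : Fintype V, ¬ (Int.gcd ((j : ℤ) + 1) n : ℤ) ∣ k * (Nat.card V : ℤ) →
      ¬ ∃ ℓ : V → ℤ, ClosedColoring G n k ℓ) := by
  have hdvd1 : (Int.gcd ((j : ℤ) + 1) n : ℤ) ∣ ((j : ℤ) + 1) := Int.gcd_dvd_left _ _
  have hdvd2 : (Int.gcd ((j : ℤ) + 1) n : ℤ) ∣ (n : ℤ) := Int.gcd_dvd_right _ _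
  constructor
  · -- first part
    intro hdk c hc
    obtain ⟨m, hm⟩ := hdk
    set t : ℤ := Int.gcdA ((j : ℤ) + 1) n * m with ht_def
    have hbez := Int.gcd_eq_gcd_ab ((j : ℤ) + 1) (n : ℤ)
    have ht : ((j : ℤ) + 1) * t ≡ k [ZMOD n] := by
      have heq : ((j : ℤ) + 1) * t = k + (n : ℤ) * (-(Int.gcdB ((j : ℤ) + 1) n * m)) := by
        rw [ht_def, hm, hbez]; ring
      rw [heq]; exact Int.modEq_add_fac_self
    have hcol : G.Colorable c := by
      rw [← SimpleGraph.chromaticNumber_le_iff_colorable, hc]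
    obtain ⟨C⟩ := hcol
    set f : Fin c → ℤ := fun i => t + (n : ℤ) * (i : ℤ) with hf_def
    have hfinj : Function.Injective f := by
      intro i i' h
      have hn' : (n : ℤ) ≠ 0 := by exact_mod_cast hn.ne'
      have h2 : (n : ℤ) * (i : ℤ) = (n : ℤ) * (i' : ℤ) := by
        simp only [hf_def] at h; linarith
      have : (i : ℤ) = (i' : ℤ) := mul_left_cancel₀ hn' h2
      exact Fin.ext (by exact_mod_cast this)
    set ℓ : V → ℤ := fun v => f (C v) with hℓ_def
    have hprop : ProperLabeling G ℓ := by
      intro v w h hvw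
      exact C.valid h (hfinj hvw)
    have hclosed : ClosedColoring G n k ℓ := by
      intro v
      have hcard : (G.neighborFinset v).card = j := hreg v
      have hsum : ℓ v + ∑ u ∈ G.neighborFinset v, ℓ u
          = ((j : ℤ) + 1) * t + (n : ℤ) *
            ((C v : ℤ) + ∑ u ∈ G.neighborFinset v, (C u : ℤ)) := by
        simp only [hℓ_def, hf_def, Finset.sum_add_distrib, Finset.sum_const, hcard,
          ← Finset.mul_sum]
        ring
      rw [hsum]
      exact Int.modEq_add_fac_self.trans ht
    have hsub : Set.range ℓ ⊆ Set.range f := by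
      rintro x ⟨v, rfl⟩; exact ⟨C v, rfl⟩
    have hfin : (Set.range ℓ).Finite := (Set.finite_range f).subset hsub
    have hle : (Set.range ℓ).ncard ≤ c := by
      have hrange : (Set.range f).ncard = c := by
        rw [← Set.image_univ, Set.ncard_image_of_injective _ hfinj, Set.ncard_univ,
          Nat.card_eq_fintype_card, Fintype.card_fin]
      have h := Set.ncard_le_ncard hsub (Set.finite_range f)
      rwa [hrange] at h
    have hge : c ≤ (Set.range ℓ).ncard := chrom_le_ncard G c hc ℓ hprop hfin
    exact ⟨⟨ℓ, hprop, hclosed, hfin, le_antisymm hle hge⟩,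
      fun ℓ' hp' _ hfin' => chrom_le_ncard G c hc ℓ' hp' hfin'⟩
  · -- second part
    rintro _ hndvd ⟨ℓ, hℓ⟩
    apply hndvd
    have hdouble : ∑ v, ∑ u ∈ G.neighborFinset v, ℓ u = (j : ℤ) * ∑ v, ℓ v := by
      rw [Finset.sum_comm' (t' := Finset.univ) (s' := fun u => G.neighborFinset u)
        (fun v u => by
          simp only [Finset.mem_univ, true_and, and_true,
            SimpleGraph.mem_neighborFinset]
          exact G.adj_comm v u)]
      rw [Finset.mul_sum]
      refine Finset.sum_congr rfl fun u _ => ?_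
      rw [Finset.sum_const, SimpleGraph.card_neighborFinset_eq_degree, hreg u, nsmul_eq_mul]
    have htot : ∑ v, (ℓ v + ∑ u ∈ G.neighborFinset v, ℓ u)
        = ((j : ℤ) + 1) * ∑ v, ℓ v := by
      rw [Finset.sum_add_distrib, hdouble]; ring
    have hmod : ((j : ℤ) + 1) * ∑ v, ℓ v ≡ (Fintype.card V : ℤ) * k [ZMOD n] := by
      rw [← ZMod.intCast_eq_intCast_iff, ← htot, Int.cast_sum]
      rw [Finset.sum_congr rfl (fun v _ => (ZMod.intCast_eq_intCast_iff _ _ _).2 (hℓ v))]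
      rw [Finset.sum_const, Finset.card_univ]
      push_cast
      ring
    have hdvd3 : (Int.gcd ((j : ℤ) + 1) n : ℤ) ∣
        (Fintype.card V : ℤ) * k - ((j : ℤ) + 1) * ∑ v, ℓ v :=
      dvd_trans hdvd2 hmod.dvd
    have hfinal : (Int.gcd ((j : ℤ) + 1) n : ℤ) ∣ (Fintype.card V : ℤ) * k := by
      have h := dvd_add hdvd3 (hdvd1.mul_right (∑ v, ℓ v))
      simpa using h
    rw [Nat.card_eq_fintype_card, mul_comm]
    exact hfinal
end

section
/- For the cycle C_m (m ≥ 3): χ_{n,k}(C_m) = 2 if gcd(3,n) | k and m is even; χ_{n,k}(C_m) = 3 if gcd(3,n) | k and m is odd, or if gcd(3,n) ∤ k and 3 | m; and χ_{n,k}(C_m) does not exist if gcd(3,n) ∤ k and 3 ∤ m. -/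
open SimpleGraph
open Fin.CommRing

noncomputable instance (m : ℕ) : (cycleGraph m).LocallyFinite :=
  fun _ => (Set.toFinite _).fintype

section helpers

variable {m : ℕ} [NeZero m]

lemma pigeon {a b c x y : ℤ} (ha : a = x ∨ a = y) (hb : b = x ∨ b = y)
    (hc : c = x ∨ c = y) (h1 : a ≠ b) (h2 : b ≠ c) : a = c := by
  rcases ha with rfl | rfl <;> rcases hb with rfl | rfl <;>
    rcases hc with h | h <;> simp_all

lemma fin_adj (hm : 3 ≤ m) {u v : Fin m} :
    (cycleGraph m).Adj u v ↔ u = v + 1 ∨ v = u + 1 := by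
  have h1 : (1 : Fin m).val = 1 := by
    rw [Fin.val_one']; exact Nat.mod_eq_of_lt (by omega)
  have key : ∀ a b : Fin m, (a - b).val = 1 ↔ a = b + 1 := by
    intro a b
    constructor
    · intro h
      have h2 : a - b = 1 := Fin.ext (h.trans h1.symm)
      have h3 := sub_eq_iff_eq_add.mp h2
      rw [h3]; ring
    · intro h
      rw [h]
      have h2 : b + 1 - b = 1 := by ring
      rw [h2, h1]
  rw [cycleGraph_adj', key, key]

lemma sub_ne_add (hm : 3 ≤ m) (v : Fin m) : v - 1 ≠ v + 1 := by
  intro h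
  have h2 : v + ((2 : ℕ) : Fin m) = v := by
    have e : (2 : ℕ) = 1 + 1 := rfl
    rw [e, Nat.cast_add, Nat.cast_one, ← add_assoc, ← h]
    ring
  have h3 : ((2 : ℕ) : Fin m) = 0 := by
    apply add_left_cancel (a := v)
    rw [h2, add_zero]
  have h4 := congrArg Fin.val h3
  rw [Fin.val_natCast, Fin.val_zero, Nat.mod_eq_of_lt (by omega)] at h4
  omega

lemma fin_nbr (hm : 3 ≤ m) (v : Fin m) :
    (cycleGraph m).neighborFinset v = {v - 1, v + 1} := by
  ext u
  rw [mem_neighborFinset, fin_adj hm, Finset.mem_insert, Finset.mem_singleton]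
  have h : (u = v - 1) ↔ (v = u + 1) := by
    rw [eq_sub_iff_add_eq]; exact eq_comm
  tauto

lemma closed_sum (hm : 3 ≤ m) {n k : ℤ} {ℓ : Fin m → ℤ}
    (hc : ClosedColoring (cycleGraph m) n k ℓ) (v : Fin m) :
    ℓ (v - 1) + ℓ v + ℓ (v + 1) ≡ k [ZMOD n] := by
  have h := hc v
  rw [fin_nbr hm, Finset.sum_pair (sub_ne_add hm v)] at h
  calc ℓ (v - 1) + ℓ v + ℓ (v + 1) = ℓ v + (ℓ (v - 1) + ℓ (v + 1)) := by ring
    _ ≡ k [ZMOD n] := h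

lemma step_all (hm : 3 ≤ m) {α : Type*} {r : α → α → Prop} (hr : Equivalence r)
    {ℓ : Fin m → α} {d : ℕ} (hd : Nat.Coprime d m)
    (hstep : ∀ v, r (ℓ v) (ℓ (v + (d : Fin m)))) (v w : Fin m) : r (ℓ v) (ℓ w) := by
  have key : ∀ (e : ℕ), (∀ u, r (ℓ u) (ℓ (u + (e : Fin m)))) →
      ∀ t : ℕ, ∀ u, r (ℓ u) (ℓ (u + ((e * t : ℕ) : Fin m))) := by
    intro e he t
    induction t with
    | zero => intro u; simpa using hr.refl (ℓ u)
    | succ t ih =>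
        intro u
        have h1 : u + ((e * (t + 1) : ℕ) : Fin m) =
            (u + ((e * t : ℕ) : Fin m)) + (e : Fin m) := by
          push_cast; ring
        rw [h1]
        exact hr.trans (ih u) (he _)
  obtain ⟨t, -, ht⟩ := Nat.exists_mul_mod_eq_one_of_coprime hd (by omega)
  have h1 : ∀ u : Fin m, r (ℓ u) (ℓ (u + 1)) := by
    intro u
    have h := key d hstep t u
    have e1 : ((d * t : ℕ) : Fin m) = 1 := by
      apply Fin.ext
      rw [Fin.val_natCast, ht, Fin.val_one', Nat.mod_eq_of_lt (by omega)]
    rwa [e1] at h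
  have h2 : ∀ j : ℕ, r (ℓ v) (ℓ (v + (j : Fin m))) := by
    intro j
    have h := key 1 (by simpa using h1) j v
    simpa using h
  have h3 := h2 (w - v).val
  have e : v + (((w - v).val : ℕ) : Fin m) = w := by
    rw [Fin.cast_val_eq_self]; ring
  rwa [e] at h3

lemma two_val_period (hm : 3 ≤ m) {ℓ : Fin m → ℤ} {x y : ℤ}
    (hp : ProperLabeling (cycleGraph m) ℓ) (hv : ∀ v, ℓ v = x ∨ ℓ v = y)
    (v : Fin m) : ℓ (v - 1) = ℓ (v + 1) := by
  have a1 : (cycleGraph m).Adj (v - 1) v := (fin_adj hm).2 (Or.inr (by ring))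
  have a2 : (cycleGraph m).Adj v (v + 1) := (fin_adj hm).2 (Or.inr rfl)
  exact pigeon (hv _) (hv _) (hv _) (hp a1) (hp a2)

lemma gcd_dvd_of_modeq {n : ℕ} {k x : ℤ} (h : 3 * x ≡ k [ZMOD (n : ℤ)]) :
    (Int.gcd 3 n : ℤ) ∣ k := by
  have h1 : (n : ℤ) ∣ k - 3 * x := h.dvd
  have h2 : (Int.gcd 3 n : ℤ) ∣ (n : ℤ) := Int.gcd_dvd_right _ _
  have h3 : (Int.gcd 3 n : ℤ) ∣ (3 : ℤ) := Int.gcd_dvd_left _ _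
  have e : k = (k - 3 * x) + 3 * x := by ring
  rw [e]
  exact dvd_add (h2.trans h1) (h3.mul_right x)

lemma two_val_dvd (hm : 3 ≤ m) {n : ℕ} {k : ℤ} {ℓ : Fin m → ℤ} {x y : ℤ}
    (hp : ProperLabeling (cycleGraph m) ℓ)
    (hc : ClosedColoring (cycleGraph m) (n : ℤ) k ℓ)
    (hv : ∀ v, ℓ v = x ∨ ℓ v = y) : (Int.gcd 3 n : ℤ) ∣ k := by
  have per := two_val_period hm hp hv
  have sum2 : ∀ v : Fin m, ℓ v + 2 * ℓ (v + 1) ≡ k [ZMOD (n : ℤ)] := by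
    intro v
    have h := closed_sum hm hc v
    calc ℓ v + 2 * ℓ (v + 1) = ℓ (v - 1) + ℓ v + ℓ (v + 1) := by rw [per v]; ring
      _ ≡ k [ZMOD (n : ℤ)] := h
  have hper2 : ℓ (0 + 1 + 1) = ℓ (0 : Fin m) := by
    have h := per (0 + 1)
    have e : (0 : Fin m) + 1 - 1 = 0 := by ring
    rw [e] at h
    exact h.symm
  have sA := sum2 0
  have sB := sum2 (0 + 1)
  rw [hper2] at sB
  have h01 : ℓ ((0 : Fin m) + 1) ≡ ℓ (0 : Fin m) [ZMOD (n : ℤ)] := by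
    rw [Int.modEq_iff_dvd]
    have hd := (sA.trans sB.symm).dvd
    have e : ℓ (0 : Fin m) - ℓ (0 + 1) =
        (ℓ ((0 : Fin m) + 1) + 2 * ℓ 0) - (ℓ (0 : Fin m) + 2 * ℓ (0 + 1)) := by ring
    rwa [e]
  have h3 : 3 * ℓ (0 : Fin m) ≡ k [ZMOD (n : ℤ)] := by
    calc 3 * ℓ (0 : Fin m) = ℓ 0 + 2 * ℓ 0 := by ring
      _ ≡ ℓ 0 + 2 * ℓ (0 + 1) [ZMOD (n : ℤ)] := (h01.symm.mul_left 2).add_left _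
      _ ≡ k [ZMOD (n : ℤ)] := sA
  exact gcd_dvd_of_modeq h3

lemma two_val_odd_false (hm : 3 ≤ m) (hmo : Odd m) {ℓ : Fin m → ℤ} {x y : ℤ}
    (hp : ProperLabeling (cycleGraph m) ℓ)
    (hv : ∀ v, ℓ v = x ∨ ℓ v = y) : False := by
  have per := two_val_period hm hp hv
  have hcop : Nat.Coprime 2 m := (Nat.prime_two.coprime_iff_not_dvd).mpr (by
    rcases hmo with ⟨t, rfl⟩; omega)
  have hstep : ∀ v : Fin m, ℓ v = ℓ (v + ((2 : ℕ) : Fin m)) := by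
    intro v
    have h := per (v + 1)
    have e1 : v + 1 - 1 = v := by ring
    have e2 : v + 1 + 1 = v + ((2 : ℕ) : Fin m) := by
      have e : (2 : ℕ) = 1 + 1 := rfl
      rw [e, Nat.cast_add, Nat.cast_one]; ring
    rw [e1, e2] at h
    exact h
  have heq := step_all hm eq_equivalence hcop hstep 0 (0 + 1)
  have hadj : (cycleGraph m).Adj 0 (0 + 1) := (fin_adj hm).2 (Or.inr rfl)
  exact hp hadj heq

lemma ge_two (hm : 3 ≤ m) {ℓ : Fin m → ℤ}
    (hp : ProperLabeling (cycleGraph m) ℓ) (hf : (Set.range ℓ).Finite) :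
    2 ≤ (Set.range ℓ).ncard := by
  have hadj : (cycleGraph m).Adj 0 (0 + 1) := (fin_adj hm).2 (Or.inr rfl)
  have hne := hp hadj
  have h : 1 < (Set.range ℓ).ncard :=
    (Set.one_lt_ncard hf).mpr ⟨ℓ 0, ⟨0, rfl⟩, ℓ (0 + 1), ⟨0 + 1, rfl⟩, hne⟩
  omega

lemma mod_shift (n : ℕ) (x t : ℤ) : x + (n : ℤ) * t ≡ x [ZMOD (n : ℤ)] := by
  rw [Int.modEq_iff_dvd]
  exact ⟨-t, by ring⟩

lemma closed_of_mod (hm : 3 ≤ m) {n : ℕ} {k x : ℤ} {ℓ : Fin m → ℤ}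
    (h3 : 3 * x ≡ k [ZMOD (n : ℤ)]) (hl : ∀ v, ℓ v ≡ x [ZMOD (n : ℤ)]) :
    ClosedColoring (cycleGraph m) (n : ℤ) k ℓ := by
  intro v
  rw [fin_nbr hm, Finset.sum_pair (sub_ne_add hm v)]
  calc ℓ v + (ℓ (v - 1) + ℓ (v + 1)) ≡ x + (x + x) [ZMOD (n : ℤ)] :=
        (hl v).add ((hl _).add (hl _))
    _ = 3 * x := by ring
    _ ≡ k [ZMOD (n : ℤ)] := h3

lemma exists_root {n : ℕ} {k : ℤ} (hk : (Int.gcd 3 n : ℤ) ∣ k) :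
    ∃ x : ℤ, 3 * x ≡ k [ZMOD (n : ℤ)] := by
  obtain ⟨d, hd⟩ := hk
  refine ⟨Int.gcdA 3 n * d, ?_⟩
  rw [Int.modEq_iff_dvd]
  refine ⟨Int.gcdB 3 n * d, ?_⟩
  have hb := Int.gcd_eq_gcd_ab 3 (n : ℤ)
  calc k - 3 * (Int.gcdA 3 n * d)
      = (Int.gcd 3 (n : ℤ) : ℤ) * d - 3 * Int.gcdA 3 (n : ℤ) * d := by rw [hd]; ring
    _ = (n : ℤ) * (Int.gcdB 3 n * d) := by rw [hb]; ring

end helpers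

section constructions

variable {m : ℕ} [NeZero m]

lemma cancel_modeq {n a b s k : ℤ} (h1 : a + s ≡ k [ZMOD n]) (h2 : b + s ≡ k [ZMOD n]) :
    a ≡ b [ZMOD n] := by
  rw [Int.modEq_iff_dvd]
  have hd := (h1.trans h2.symm).dvd
  have e : b - a = (b + s) - (a + s) := by ring
  rwa [e]

lemma lab_ne {n : ℕ} (hn : 0 < n) (x : ℤ) {a b : ℕ} (h : a ≠ b) :
    x + (n : ℤ) * a ≠ x + (n : ℤ) * b := by
  intro heq
  apply h
  have h1 : (n : ℤ) * a = (n : ℤ) * b := by linarith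
  have h2 : (a : ℤ) = b := mul_left_cancel₀ (by exact_mod_cast hn.ne') h1
  exact_mod_cast h2

lemma val_add_one (hm : 3 ≤ m) (v : Fin m) : (v + 1).val = (v.val + 1) % m := by
  rw [Fin.val_add, Fin.val_one', Nat.mod_eq_of_lt (show 1 < m by omega)]

lemma construct_even (hm : 3 ≤ m) (hme : Even m) {n : ℕ} (hn : 0 < n) {k x : ℤ}
    (hx : 3 * x ≡ k [ZMOD (n : ℤ)]) :
    ∃ ℓ : Fin m → ℤ, ProperLabeling (cycleGraph m) ℓ ∧
      ClosedColoring (cycleGraph m) (n : ℤ) k ℓ ∧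
      (Set.range ℓ).Finite ∧ (Set.range ℓ).ncard = 2 := by
  obtain ⟨t, ht⟩ := hme
  set ℓ : Fin m → ℤ := fun v => x + (n : ℤ) * (v.val % 2 : ℕ) with hℓ
  have hflip : ∀ v : Fin m, (v + 1).val % 2 ≠ v.val % 2 := by
    intro v
    rw [val_add_one hm]
    have hv := v.isLt
    rcases Nat.lt_or_ge (v.val + 1) m with h | h
    · rw [Nat.mod_eq_of_lt h]; omega
    · have e : v.val + 1 = m := by omega
      rw [e, Nat.mod_self]; omega
  have hne : ∀ v : Fin m, ℓ (v + 1) ≠ ℓ v := fun v => lab_ne hn x (hflip v)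
  have hrange : Set.range ℓ = {x, x + n} := by
    apply Set.Subset.antisymm
    · rintro _ ⟨v, rfl⟩
      rcases Nat.mod_two_eq_zero_or_one v.val with h | h
      · left
        show x + (n : ℤ) * ((v.val % 2 : ℕ) : ℤ) = x
        rw [h]; push_cast; ring
      · right
        show x + (n : ℤ) * ((v.val % 2 : ℕ) : ℤ) ∈ ({x + n} : Set ℤ)
        rw [h]; push_cast
        simp
    · have m1 : x ∈ Set.range ℓ := ⟨⟨0, by omega⟩, by
        show x + (n : ℤ) * (((0 : ℕ) % 2 : ℕ) : ℤ) = x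
        norm_num⟩
      have m2 : x + (n : ℤ) ∈ Set.range ℓ := ⟨⟨1, by omega⟩, by
        show x + (n : ℤ) * (((1 : ℕ) % 2 : ℕ) : ℤ) = x + n
        norm_num⟩
      rintro z (rfl | rfl)
      · exact m1
      · exact m2
  refine ⟨ℓ, ?_, ?_, ?_, ?_⟩
  · intro v w hadj
    rcases (fin_adj hm).1 hadj with h | h
    · rw [h]; exact hne w
    · rw [h]; exact (hne v).symm
  · exact closed_of_mod hm hx (fun v => mod_shift n x _)
  · rw [hrange]; exact (Set.finite_singleton _).insert _
  · rw [hrange]; exact Set.ncard_pair (by omega)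

lemma construct_odd (hm : 3 ≤ m) (_hmo : Odd m) {n : ℕ} (hn : 0 < n) {k x : ℤ}
    (hx : 3 * x ≡ k [ZMOD (n : ℤ)]) :
    ∃ ℓ : Fin m → ℤ, ProperLabeling (cycleGraph m) ℓ ∧
      ClosedColoring (cycleGraph m) (n : ℤ) k ℓ ∧
      (Set.range ℓ).Finite ∧ (Set.range ℓ).ncard = 3 := by
  set c : Fin m → ℕ := fun v => if v.val = m - 1 then 2 else v.val % 2 with hcdef
  set ℓ : Fin m → ℤ := fun v => x + (n : ℤ) * (c v : ℕ) with hℓ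
  have hflip : ∀ v : Fin m, c (v + 1) ≠ c v := by
    intro v
    have hv := v.isLt
    have hva := val_add_one hm v
    rcases Nat.lt_or_ge (v.val + 1) m with h | h
    · have e : (v + 1).val = v.val + 1 := by rw [hva, Nat.mod_eq_of_lt h]
      simp only [hcdef, e]
      rcases Nat.lt_or_ge (v.val + 1) (m - 1) with h2 | h2
      · rw [if_neg (by omega), if_neg (by omega)]; omega
      · have e2 : v.val + 1 = m - 1 := by omega
        rw [if_pos e2, if_neg (by omega)]
        omega
    · have e : (v + 1).val = 0 := by
        rw [hva, show v.val + 1 = m by omega, Nat.mod_self]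
      simp only [hcdef, e]
      rw [if_neg (by omega), if_pos (by omega)]
      omega
  have hne : ∀ v : Fin m, ℓ (v + 1) ≠ ℓ v := fun v => lab_ne hn x (hflip v)
  have hrange : Set.range ℓ = {x, x + n, x + n * 2} := by
    apply Set.Subset.antisymm
    · rintro _ ⟨v, rfl⟩
      have : c v = 0 ∨ c v = 1 ∨ c v = 2 := by
        simp only [hcdef]; split <;> omega
      rcases this with h | h | h
      · left
        show x + (n : ℤ) * ((c v : ℕ) : ℤ) = x
        rw [h]; push_cast; ring
      · right; left
        show x + (n : ℤ) * ((c v : ℕ) : ℤ) = x + n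
        rw [h]; push_cast; ring
      · right; right
        show x + (n : ℤ) * ((c v : ℕ) : ℤ) ∈ ({x + n * 2} : Set ℤ)
        rw [h]; push_cast
        simp
    · have hc0 : c ⟨0, by omega⟩ = 0 := by simp only [hcdef]; rw [if_neg (by omega)]
      have hc1 : c ⟨1, by omega⟩ = 1 := by simp only [hcdef]; rw [if_neg (by omega)]
      have hc2 : c ⟨m - 1, by omega⟩ = 2 := by simp [hcdef]
      have m1 : x ∈ Set.range ℓ := ⟨⟨0, by omega⟩, by
        show x + (n : ℤ) * ((c ⟨0, by omega⟩ : ℕ) : ℤ) = x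
        rw [hc0]; push_cast; ring⟩
      have m2 : x + (n : ℤ) ∈ Set.range ℓ := ⟨⟨1, by omega⟩, by
        show x + (n : ℤ) * ((c ⟨1, by omega⟩ : ℕ) : ℤ) = x + n
        rw [hc1]; push_cast; ring⟩
      have m3 : x + (n : ℤ) * 2 ∈ Set.range ℓ := ⟨⟨m - 1, by omega⟩, by
        show x + (n : ℤ) * ((c ⟨m - 1, by omega⟩ : ℕ) : ℤ) = x + n * 2
        rw [hc2]; push_cast; ring⟩
      rintro z (rfl | rfl | rfl)
      · exact m1
      · exact m2
      · exact m3
  refine ⟨ℓ, ?_, ?_, ?_, ?_⟩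
  · intro v w hadj
    rcases (fin_adj hm).1 hadj with h | h
    · rw [h]; exact hne w
    · rw [h]; exact (hne v).symm
  · exact closed_of_mod hm hx (fun v => mod_shift n x _)
  · rw [hrange]
    exact ((Set.finite_singleton _).insert _).insert _
  · rw [hrange]
    exact Set.ncard_eq_three.mpr ⟨x, x + n, x + n * 2, by omega, by omega, by omega, rfl⟩

lemma construct_div3 (hm : 3 ≤ m) (h3m : 3 ∣ m) {n : ℕ} (hn : 0 < n) (k : ℤ) :
    ∃ ℓ : Fin m → ℤ, ProperLabeling (cycleGraph m) ℓ ∧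
      ClosedColoring (cycleGraph m) (n : ℤ) k ℓ ∧
      (Set.range ℓ).Finite ∧ (Set.range ℓ).ncard = 3 := by
  have hn' : (0 : ℤ) < n := by exact_mod_cast hn
  have hr0 : 0 ≤ k % (n : ℤ) := Int.emod_nonneg k hn'.ne'
  have hrn : k % (n : ℤ) < n := Int.emod_lt_of_pos k hn'
  set f : ℕ → ℤ := fun j => if j = 0 then 0 else if j = 1 then n else k % n + 2 * n
    with hfdef
  set ℓ : Fin m → ℤ := fun v => f (v.val % 3) with hℓ
  have cstep : ∀ v : Fin m, (v + 1).val % 3 = (v.val + 1) % 3 := by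
    intro v
    rw [val_add_one hm, Nat.mod_mod_of_dvd _ h3m]
  have hsum : k % (n : ℤ) + 3 * n ≡ k [ZMOD (n : ℤ)] := by
    rw [Int.modEq_iff_dvd]
    refine ⟨k / n - 3, ?_⟩
    rw [Int.emod_def]; ring
  have hne : ∀ v : Fin m, ℓ (v + 1) ≠ ℓ v := by
    intro v
    have h1 : ℓ (v + 1) = f ((v.val + 1) % 3) := by rw [hℓ]; simp only []; rw [cstep]
    rw [h1, hℓ]
    simp only []
    have h3 : v.val % 3 = 0 ∨ v.val % 3 = 1 ∨ v.val % 3 = 2 := by omega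
    rcases h3 with h | h | h <;>
      rw [h, show (v.val + 1) % 3 = (v.val % 3 + 1) % 3 by omega, h] <;>
      simp only [hfdef] <;> norm_num <;> omega
  refine ⟨ℓ, ?_, ?_, ?_, ?_⟩
  · intro v w hadj
    rcases (fin_adj hm).1 hadj with h | h
    · rw [h]; exact hne w
    · rw [h]; exact (hne v).symm
  · intro v
    rw [fin_nbr hm, Finset.sum_pair (sub_ne_add hm v)]
    have e1 : v.val % 3 = ((v - 1).val + 1) % 3 := by
      have := cstep (v - 1)
      rw [show v - 1 + 1 = v by ring] at this
      omega
    have e2 : (v + 1).val % 3 = ((v - 1).val + 2) % 3 := by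
      have := cstep v
      omega
    have goal3 : ∀ a : ℕ, a < 3 →
        f ((a + 1) % 3) + (f a + f ((a + 2) % 3)) ≡ k [ZMOD (n : ℤ)] := by
      intro a ha
      have h3 : a = 0 ∨ a = 1 ∨ a = 2 := by omega
      rcases h3 with rfl | rfl | rfl <;>
        · simp only [hfdef]
          norm_num
          exact Int.mod_modEq k n
    have hlt : (v - 1).val % 3 < 3 := by omega
    have := goal3 ((v - 1).val % 3) hlt
    rw [show ((v-1).val % 3 + 1) % 3 = ((v-1).val + 1) % 3 by omega,
        show ((v-1).val % 3 + 2) % 3 = ((v-1).val + 2) % 3 by omega] at this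
    simp only [hℓ]
    rw [e1, e2]
    exact this
  · have hsub : Set.range ℓ ⊆ {0, (n : ℤ), k % n + 2 * n} := by
      rintro _ ⟨v, rfl⟩
      have h3 : v.val % 3 = 0 ∨ v.val % 3 = 1 ∨ v.val % 3 = 2 := by omega
      rcases h3 with h | h | h <;> simp [hℓ, h, hfdef]
    exact Set.Finite.subset (Set.toFinite _) hsub
  · have hrange : Set.range ℓ = {0, (n : ℤ), k % n + 2 * n} := by
      apply Set.Subset.antisymm
      · rintro _ ⟨v, rfl⟩
        have h3 : v.val % 3 = 0 ∨ v.val % 3 = 1 ∨ v.val % 3 = 2 := by omega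
        rcases h3 with h | h | h <;> simp [hℓ, h, hfdef]
      · have m1 : (0 : ℤ) ∈ Set.range ℓ := ⟨⟨0, by omega⟩, by simp [hℓ, hfdef]⟩
        have m2 : (n : ℤ) ∈ Set.range ℓ := ⟨⟨1, by omega⟩, by simp [hℓ, hfdef]⟩
        have m3 : k % (n : ℤ) + 2 * n ∈ Set.range ℓ := ⟨⟨2, by omega⟩, by simp [hℓ, hfdef]⟩
        rintro z (rfl | rfl | rfl)
        · exact m1
        · exact m2
        · exact m3
    rw [hrange]
    exact Set.ncard_eq_three.mpr ⟨_, _, _, by omega, by omega, by omega, rfl⟩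

end constructions

theorem chi_cycleGraph (k : ℤ) (n m : ℕ) (hn : 0 < n) (hm : 3 ≤ m) :
    ((Int.gcd 3 n : ℤ) ∣ k → Even m → HasClosedChrom (cycleGraph m) n k 2) ∧
    ((Int.gcd 3 n : ℤ) ∣ k → Odd m → HasClosedChrom (cycleGraph m) n k 3) ∧
    (¬ (Int.gcd 3 n : ℤ) ∣ k → 3 ∣ m → HasClosedChrom (cycleGraph m) n k 3) ∧
    (¬ (Int.gcd 3 n : ℤ) ∣ k → ¬ 3 ∣ m →
      ¬ ∃ ℓ : Fin m → ℤ, ProperLabeling (cycleGraph m) ℓ ∧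
        ClosedColoring (cycleGraph m) n k ℓ) := by
  haveI : NeZero m := ⟨by omega⟩
  have two_vals : ∀ (ℓ : Fin m → ℤ), (Set.range ℓ).Finite →
      (Set.range ℓ).ncard = 2 → ∃ x y : ℤ, ∀ v, ℓ v = x ∨ ℓ v = y := by
    intro ℓ hf h2
    obtain ⟨x, y, hxy, hs⟩ := Set.ncard_eq_two.mp h2
    refine ⟨x, y, fun v => ?_⟩
    have hv : ℓ v ∈ Set.range ℓ := ⟨v, rfl⟩
    rw [hs] at hv
    simpa using hv
  refine ⟨?_, ?_, ?_, ?_⟩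
  · intro hk hme
    obtain ⟨x, hx⟩ := exists_root hk
    exact ⟨construct_even hm hme hn hx, fun ℓ hp _ hf => ge_two hm hp hf⟩
  · intro hk hmo
    obtain ⟨x, hx⟩ := exists_root hk
    refine ⟨construct_odd hm hmo hn hx, ?_⟩
    intro ℓ hp hc hf
    by_contra hlt
    push_neg at hlt
    have h2 := ge_two hm hp hf
    obtain ⟨x', y', hv⟩ := two_vals ℓ hf (by omega)
    exact two_val_odd_false hm hmo hp hv
  · intro hk h3m
    refine ⟨construct_div3 hm h3m hn k, ?_⟩
    intro ℓ hp hc hf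
    by_contra hlt
    push_neg at hlt
    have h2 := ge_two hm hp hf
    obtain ⟨x', y', hv⟩ := two_vals ℓ hf (by omega)
    exact hk (two_val_dvd hm hp hc hv)
  · rintro hk h3m ⟨ℓ, hp, hc⟩
    have hr : Equivalence (fun a b : ℤ => a ≡ b [ZMOD (n : ℤ)]) :=
      ⟨fun a => Int.ModEq.refl a, Int.ModEq.symm, Int.ModEq.trans⟩
    have hcop : Nat.Coprime 3 m := (Nat.prime_three.coprime_iff_not_dvd).mpr h3m
    have hstep : ∀ v : Fin m, ℓ v ≡ ℓ (v + ((3 : ℕ) : Fin m)) [ZMOD (n : ℤ)] := by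
      intro v
      have s1 := closed_sum hm hc (v + 1)
      have s2 := closed_sum hm hc (v + 1 + 1)
      rw [show v + 1 - 1 = v by ring] at s1
      rw [show v + 1 + 1 - 1 = v + 1 by ring] at s2
      have s1' : ℓ v + (ℓ (v + 1) + ℓ (v + 1 + 1)) ≡ k [ZMOD (n : ℤ)] := by
        calc ℓ v + (ℓ (v + 1) + ℓ (v + 1 + 1))
            = ℓ v + ℓ (v + 1) + ℓ (v + 1 + 1) := by ring
          _ ≡ k [ZMOD (n : ℤ)] := s1
      have s2' : ℓ (v + 1 + 1 + 1) + (ℓ (v + 1) + ℓ (v + 1 + 1)) ≡ k [ZMOD (n : ℤ)] := by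
        calc ℓ (v + 1 + 1 + 1) + (ℓ (v + 1) + ℓ (v + 1 + 1))
            = ℓ (v + 1) + ℓ (v + 1 + 1) + ℓ (v + 1 + 1 + 1) := by ring
          _ ≡ k [ZMOD (n : ℤ)] := s2
      have h := cancel_modeq s1' s2'
      have e : v + 1 + 1 + 1 = v + ((3 : ℕ) : Fin m) := by
        rw [show (3 : ℕ) = 1 + 1 + 1 from rfl, Nat.cast_add, Nat.cast_add, Nat.cast_one]
        ring
      rwa [e] at h
    have hall := step_all hm hr hcop hstep
    have s0 := closed_sum hm hc 0
    have e1 : ℓ ((0 : Fin m) - 1) ≡ ℓ 0 [ZMOD (n : ℤ)] := hall _ _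
    have e3 : ℓ ((0 : Fin m) + 1) ≡ ℓ 0 [ZMOD (n : ℤ)] := hall _ _
    have h3 : 3 * ℓ (0 : Fin m) ≡ k [ZMOD (n : ℤ)] := by
      calc 3 * ℓ (0 : Fin m) = ℓ 0 + ℓ 0 + ℓ 0 := by ring
        _ ≡ ℓ (0 - 1) + ℓ 0 + ℓ (0 + 1) [ZMOD (n : ℤ)] :=
          ((e1.symm.add (Int.ModEq.refl (ℓ 0))).add e3.symm)
        _ ≡ k [ZMOD (n : ℤ)] := s0
    exact hk (gcd_dvd_of_modeq h3)
end

section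
/- For the infinite complete m-ary rooted tree T_m, χ_{n,k}(T_m) = 2 if n divides mk, and χ_{n,k}(T_m) = 3 otherwise. -/
open SimpleGraph

/-- The complete m-ary rooted tree of infinite height: vertices are finite
words over `Fin m` (the root is `[]`), and each vertex `v` is adjacent to its
m children `a :: v`. -/
def mAryTree (m : ℕ) : SimpleGraph (List (Fin m)) :=
  SimpleGraph.fromRel (fun v w => ∃ a : Fin m, w = a :: v)

noncomputable instance (m : ℕ) : (mAryTree m).LocallyFinite := fun v => by
  apply Set.Finite.fintype
  apply Set.Finite.subset
    ((Set.finite_range (fun a : Fin m => a :: v)).union (Set.finite_singleton v.tail))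
  intro w hw
  rw [SimpleGraph.mem_neighborSet, mAryTree, SimpleGraph.fromRel_adj] at hw
  rcases hw.2 with ⟨a, rfl⟩ | ⟨a, h⟩
  · exact Or.inl ⟨a, rfl⟩
  · exact Or.inr (by simp [h])

lemma mAryTree_adj {m : ℕ} {v w : List (Fin m)} :
    (mAryTree m).Adj v w ↔ (∃ a, w = a :: v) ∨ (∃ a, v = a :: w) := by
  constructor
  · intro h; exact ((SimpleGraph.fromRel_adj _ _ _).1 h).2
  · intro h
    refine (SimpleGraph.fromRel_adj _ _ _).2 ⟨?_, h⟩
    rintro rfl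
    rcases h with ⟨a, ha⟩ | ⟨a, ha⟩ <;>
      exact absurd (congrArg List.length ha) (by simp)

lemma adj_child {m : ℕ} (v : List (Fin m)) (a : Fin m) :
    (mAryTree m).Adj v (a :: v) := mAryTree_adj.2 (Or.inl ⟨a, rfl⟩)

lemma nbhd_nil {m : ℕ} :
    (mAryTree m).neighborFinset [] =
      Finset.univ.image (fun a : Fin m => ([a] : List (Fin m))) := by
  ext w
  simp only [SimpleGraph.mem_neighborFinset, mAryTree_adj, Finset.mem_image,
    Finset.mem_univ, true_and]
  constructor
  · rintro (⟨a, rfl⟩ | ⟨a, ha⟩)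
    · exact ⟨a, rfl⟩
    · exact absurd ha (by simp)
  · rintro ⟨a, rfl⟩; exact Or.inl ⟨a, rfl⟩

lemma nbhd_cons {m : ℕ} (b : Fin m) (t : List (Fin m)) :
    (mAryTree m).neighborFinset (b :: t) =
      insert t (Finset.univ.image (fun a : Fin m => a :: b :: t)) := by
  ext w
  simp only [SimpleGraph.mem_neighborFinset, mAryTree_adj, Finset.mem_insert,
    Finset.mem_image, Finset.mem_univ, true_and]
  constructor
  · rintro (⟨a, rfl⟩ | ⟨a, ha⟩)
    · exact Or.inr ⟨a, rfl⟩
    · exact Or.inl (by injection ha with _ h; exact h.symm)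
  · rintro (rfl | ⟨a, rfl⟩)
    · exact Or.inr ⟨b, rfl⟩
    · exact Or.inl ⟨a, rfl⟩

lemma sum_nbhd_nil {m : ℕ} (ℓ : List (Fin m) → ℤ) :
    ∑ u ∈ (mAryTree m).neighborFinset [], ℓ u = ∑ a : Fin m, ℓ [a] := by
  rw [nbhd_nil, Finset.sum_image (by intro a _ b _ h; injection h)]

lemma sum_nbhd_cons {m : ℕ} (ℓ : List (Fin m) → ℤ) (b : Fin m) (t : List (Fin m)) :
    ∑ u ∈ (mAryTree m).neighborFinset (b :: t), ℓ u
      = ℓ t + ∑ a : Fin m, ℓ (a :: b :: t) := by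
  rw [nbhd_cons, Finset.sum_insert (by simp only [Finset.mem_image, Finset.mem_univ, true_and]; rintro ⟨a, ha⟩; exact absurd (congrArg List.length ha) (by simp; omega)), Finset.sum_image (by intro a _ c _ h; exact (List.cons_eq_cons.1 h).1)]

-- state machine for the 3-label construction
def st {m : ℕ} : List (Fin m) → ℕ
  | [] => 0
  | a :: w => if st w = 0 then 1 else if st w = 1 then 2 else
      if (a : ℕ) = 0 then 0 else 2

def lab {m : ℕ} (n K : ℤ) : List (Fin m) → ℤ
  | [] => K
  | a :: w => if st w = 2 ∧ (a : ℕ) = 0 then K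
      else if lab n K w = 0 then n else 0

lemma st_le {m : ℕ} (v : List (Fin m)) : st v ≤ 2 := by
  cases v with
  | nil => simp [st]
  | cons a w => rw [st]; split_ifs <;> omega

lemma st_cons_eq_zero {m : ℕ} {a : Fin m} {w : List (Fin m)} :
    st (a :: w) = 0 ↔ st w = 2 ∧ (a : ℕ) = 0 := by
  have := st_le w
  rw [st]; split_ifs with h1 h2 h3 <;> simp_all <;> omega

lemma lab_mem {m : ℕ} (n K : ℤ) (v : List (Fin m)) :
    lab n K v = K ∨ lab n K v = 0 ∨ lab n K v = n := by
  cases v with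
  | nil => left; rfl
  | cons a w => rw [lab]; split_ifs <;> tauto

lemma lab_of_st_ne {m : ℕ} (n K : ℤ) (hK : K ≠ 0) {v : List (Fin m)}
    (hv : st v ≠ 0) : lab n K v = 0 ∨ lab n K v = n := by
  cases v with
  | nil => exact absurd rfl hv
  | cons a w =>
    have hv' : ¬ (st w = 2 ∧ (a : ℕ) = 0) := fun h => hv (st_cons_eq_zero.2 h)
    rw [lab, if_neg hv']
    split_ifs <;> tauto

lemma lab_cast {m n : ℕ} {k K : ℤ} (hK : (K : ZMod n) = (k : ZMod n))
    (v : List (Fin m)) :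
    ((lab (n : ℤ) K v : ZMod n)) = if st v = 0 then (k : ZMod n) else 0 := by
  cases v with
  | nil => simpa [st, lab] using hK
  | cons a w =>
    rw [lab]
    by_cases h1 : st w = 2 ∧ (a : ℕ) = 0
    · rw [if_pos h1, if_pos (st_cons_eq_zero.2 h1)]; exact hK
    · rw [if_neg h1, if_neg (fun h => h1 (st_cons_eq_zero.1 h))]
      split_ifs <;> simp

lemma lab_children_sum {m n : ℕ} (hm : 0 < m) {k K : ℤ}
    (hK : (K : ZMod n) = (k : ZMod n)) (v : List (Fin m)) :
    ∑ a : Fin m, ((lab (n : ℤ) K (a :: v) : ZMod n)) =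
      if st v = 2 then (k : ZMod n) else 0 := by
  have h : ∀ a : Fin m, ((lab (n : ℤ) K (a :: v) : ZMod n)) =
      if st v = 2 ∧ (a : ℕ) = 0 then (k : ZMod n) else 0 := by
    intro a
    rw [lab_cast hK]
    congr 1
    simp [st_cons_eq_zero]
  rw [Finset.sum_congr rfl (fun a _ => h a)]
  by_cases h2 : st v = 2
  · simp only [h2, true_and, if_true]
    rw [Finset.sum_eq_single_of_mem (⟨0, hm⟩ : Fin m) (Finset.mem_univ _) ?_]
    · simp
    · intro b _ hb
      rw [if_neg (fun h => hb (Fin.ext h))]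
  · simp [h2]

lemma lab_proper {m : ℕ} {n K : ℤ} (hn : 0 < n) (hK0 : K ≠ 0) (hKn : K ≠ n)
    (v : List (Fin m)) (a : Fin m) : lab n K (a :: v) ≠ lab n K v := by
  rw [lab]
  split_ifs with h1 h2
  · rcases lab_of_st_ne n K hK0 (v := v) (by omega) with h | h <;> rw [h] <;> assumption
  · rw [h2]; omega
  · intro h; exact h2 h.symm

lemma lab_closed {m n : ℕ} (hm : 0 < m) {k K : ℤ}
    (hK : (K : ZMod n) = (k : ZMod n)) (v : List (Fin m)) :
    ((lab (n : ℤ) K v + ∑ u ∈ (mAryTree m).neighborFinset v,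
        lab (n : ℤ) K u : ℤ) : ZMod n) = (k : ZMod n) := by
  cases v with
  | nil =>
    rw [sum_nbhd_nil]
    push_cast
    rw [lab_cast hK, Finset.sum_congr rfl
      (fun a _ => lab_cast hK (([a] : List (Fin m))))]
    have h0 : ∀ a : Fin m, st ([a] : List (Fin m)) ≠ 0 := by
      intro a h
      have := (st_cons_eq_zero.1 h).1
      simp [st] at this
    rw [show st ([] : List (Fin m)) = 0 from rfl, if_pos rfl,
      Finset.sum_congr rfl (fun a _ => if_neg (h0 a))]
    simp
  | cons b t =>
    rw [sum_nbhd_cons]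
    push_cast
    rw [lab_cast hK, lab_cast hK]
    have hc := lab_children_sum hm hK (b :: t)
    push_cast at hc
    rw [hc]
    have ht := st_le t
    have hbt : st (b :: t) = if st t = 0 then 1 else if st t = 1 then 2 else
        if (b : ℕ) = 0 then 0 else 2 := rfl
    by_cases h0 : st t = 0
    · rw [hbt]; simp [h0]
    · by_cases h1 : st t = 1
      · rw [hbt]; simp [h0, h1]
      · have h2 : st t = 2 := by omega
        by_cases hb : (b : ℕ) = 0
        · rw [hbt]; simp [h0, h1, h2, hb]
        · rw [hbt]; simp [h0, h1, h2, hb]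

lemma lab_range {m : ℕ} (hm : 0 < m) {n K : ℤ} (hn : 0 < n) (hK0 : K ≠ 0) :
    Set.range (lab (m := m) n K) = {K, 0, n} := by
  apply Set.Subset.antisymm
  · rintro x ⟨v, rfl⟩
    rcases lab_mem n K v with h | h | h <;> simp [h]
  · intro x hx
    rcases hx with rfl | rfl | rfl
    · exact ⟨[], rfl⟩
    · refine ⟨[⟨0, hm⟩], ?_⟩
      rw [lab]
      rw [if_neg (by simp [st]), if_neg (by simpa [lab] using hK0)]
    · refine ⟨[⟨0, hm⟩, ⟨0, hm⟩], ?_⟩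
      rw [lab, if_neg (by simp [st]),
        if_pos (by rw [lab, if_neg (by simp [st]), if_neg (by simpa [lab] using hK0)])]

theorem chi_mAryTree (k : ℤ) (n m : ℕ) (hn : 0 < n) (hm : 0 < m) :
    ((n : ℤ) ∣ (m : ℤ) * k → HasClosedChrom (mAryTree m) n k 2) ∧
    (¬ (n : ℤ) ∣ (m : ℤ) * k → HasClosedChrom (mAryTree m) n k 3) := by
  have cast_iff : ∀ a b : ℤ, a ≡ b [ZMOD (n:ℤ)] ↔ ((a : ZMod n) = b) :=
    fun a b => (ZMod.intCast_eq_intCast_iff a b n).symm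
  have two_le : ∀ ℓ : List (Fin m) → ℤ, ProperLabeling (mAryTree m) ℓ →
      (Set.range ℓ).Finite → 2 ≤ (Set.range ℓ).ncard := by
    intro ℓ hp hf
    have hne : ℓ [] ≠ ℓ [⟨0, hm⟩] := hp (adj_child [] ⟨0, hm⟩)
    have := (Set.one_lt_ncard_iff hf).2 ⟨_, _, ⟨[], rfl⟩, ⟨[⟨0, hm⟩], rfl⟩, hne⟩
    omega
  constructor
  · -- divisible case
    intro hdvd
    have hmk : ((m : ZMod n)) * ((k : ZMod n)) = 0 := by
      have := (ZMod.intCast_zmod_eq_zero_iff_dvd ((m:ℤ) * k) n).2 hdvd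
      push_cast at this
      exact this
    refine ⟨?_, fun ℓ hp _ hf => two_le ℓ hp hf⟩
    set X : ℤ := if k = 0 then (n : ℤ) else k with hX
    have hX0 : X ≠ 0 := by
      rw [hX]; split_ifs with h
      · exact_mod_cast hn.ne'
      · exact h
    have hXk : ((X : ZMod n)) = (k : ZMod n) := by
      rw [hX]; split_ifs with h
      · simp [h]
      · rfl
    set ℓ : List (Fin m) → ℤ := fun v => if v.length % 2 = 0 then X else 0 with hℓ
    have hchild : ∀ (v : List (Fin m)) (a : Fin m), ℓ (a :: v) ≠ ℓ v := by
      intro v a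
      by_cases h : v.length % 2 = 0
      · rw [hℓ]
        simp only [List.length_cons]
        rw [if_pos h, if_neg (by omega)]
        exact fun hh => hX0 hh.symm
      · rw [hℓ]
        simp only [List.length_cons]
        rw [if_neg h, if_pos (by omega)]
        exact hX0
    refine ⟨ℓ, ?_, ?_, ?_, ?_⟩
    · intro v w hadj
      rcases mAryTree_adj.1 hadj with ⟨a, rfl⟩ | ⟨a, rfl⟩
      · exact (hchild v a).symm
      · exact hchild w a
    · intro v
      rw [cast_iff]
      cases v with
      | nil =>
        rw [sum_nbhd_nil]
        have h1 : ∀ a : Fin m, ℓ [a] = 0 := by intro a; simp [hℓ]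
        simp only [Finset.sum_congr rfl (fun a _ => h1 a), Finset.sum_const,
          smul_zero, add_zero]
        simpa [hℓ] using hXk
      | cons b t =>
        rw [sum_nbhd_cons]
        by_cases hp : t.length % 2 = 0
        · have e1 : ℓ (b :: t) = 0 := by
            rw [hℓ]; simp only [List.length_cons]; rw [if_neg (by omega)]
          have e2 : ℓ t = X := by rw [hℓ]; simp only; rw [if_pos hp]
          have e3 : ∀ a : Fin m, ℓ (a :: b :: t) = X := by
            intro a; rw [hℓ]; simp only [List.length_cons]
            rw [if_pos (by omega)]
          rw [e1, e2, Finset.sum_congr rfl (fun a _ => e3 a), Finset.sum_const,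
            Finset.card_univ, Fintype.card_fin, nsmul_eq_mul]
          push_cast
          rw [hXk]
          linear_combination hmk
        · have e1 : ℓ (b :: t) = X := by
            rw [hℓ]; simp only [List.length_cons]; rw [if_pos (by omega)]
          have e2 : ℓ t = 0 := by rw [hℓ]; simp only; rw [if_neg hp]
          have e3 : ∀ a : Fin m, ℓ (a :: b :: t) = 0 := by
            intro a; rw [hℓ]; simp only [List.length_cons]
            rw [if_neg (by omega)]
          rw [e1, e2, Finset.sum_congr rfl (fun a _ => e3 a), Finset.sum_const,
            smul_zero]
          push_cast
          rw [hXk]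
          ring
    · have : Set.range ℓ ⊆ {X, 0} := by
        rintro z ⟨v, rfl⟩
        by_cases h : v.length % 2 = 0 <;> simp [hℓ, h]
      exact Set.Finite.subset (Set.toFinite _) this
    · have hr : Set.range ℓ = {X, 0} := by
        apply Set.Subset.antisymm
        · rintro z ⟨v, rfl⟩
          by_cases h : v.length % 2 = 0 <;> simp [hℓ, h]
        · rintro z (rfl | rfl)
          · exact ⟨[], by simp [hℓ]⟩
          · exact ⟨[⟨0, hm⟩], by simp [hℓ]⟩
      rw [hr, Set.ncard_pair hX0]
  · -- non-divisible case
    intro hndvd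
    have hnk : ¬ (n : ℤ) ∣ k := fun h => hndvd (Dvd.dvd.mul_left h m)
    set K : ℤ := k % n with hKdef
    have hK0 : K ≠ 0 := fun h2 => hnk (Int.dvd_of_emod_eq_zero h2)
    have hKlt : K < n := Int.emod_lt_of_pos k (by exact_mod_cast hn)
    have hKnn : 0 ≤ K := Int.emod_nonneg k (by exact_mod_cast hn.ne')
    have hK : ((K : ZMod n)) = (k : ZMod n) :=
      (ZMod.intCast_eq_intCast_iff _ _ _).2 (Int.emod_emod_of_dvd k dvd_rfl)
    constructor
    · refine ⟨lab (n : ℤ) K, ?_, ?_, ?_, ?_⟩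
      · intro v w hadj
        rcases mAryTree_adj.1 hadj with ⟨a, rfl⟩ | ⟨a, rfl⟩
        · exact (lab_proper (by exact_mod_cast hn) hK0 (by omega) v a).symm
        · exact lab_proper (by exact_mod_cast hn) hK0 (by omega) w a
      · intro v
        rw [cast_iff]
        exact_mod_cast lab_closed hm hK v
      · rw [lab_range hm (by exact_mod_cast hn) hK0]
        exact Set.toFinite _
      · rw [lab_range hm (by exact_mod_cast hn) hK0]
        rw [Set.ncard_insert_of_notMem (by simp [hK0]; omega),
          Set.ncard_pair (by exact_mod_cast hn.ne)]
    · intro ℓ hp hcc hf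
      by_contra hlt
      have hcard : (Set.range ℓ).ncard = 2 := by
        have := two_le ℓ hp hf
        omega
      set x := ℓ [] with hx
      set y := ℓ [⟨0, hm⟩] with hy
      have hxy : x ≠ y := hp (adj_child [] ⟨0, hm⟩)
      have heq : ({x, y} : Set ℤ) = Set.range ℓ := by
        apply Set.eq_of_subset_of_ncard_le
        · rintro z (rfl | rfl)
          · exact ⟨[], rfl⟩
          · exact ⟨[⟨0, hm⟩], rfl⟩
        · rw [hcard, Set.ncard_pair hxy]
        · exact hf
      have hmem : ∀ v, ℓ v = x ∨ ℓ v = y := by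
        intro v
        have : ℓ v ∈ ({x, y} : Set ℤ) := heq ▸ ⟨v, rfl⟩
        simpa using this
      have hcx : ∀ (v : List (Fin m)) (a : Fin m), ℓ v = x → ℓ (a :: v) = y := by
        intro v a hv
        rcases hmem (a :: v) with h | h
        · exact absurd (h.trans hv.symm).symm (hp (adj_child v a))
        · exact h
      have hcy : ∀ (v : List (Fin m)) (a : Fin m), ℓ v = y → ℓ (a :: v) = x := by
        intro v a hv
        rcases hmem (a :: v) with h | h
        · exact h
        · exact absurd (h.trans hv.symm).symm (hp (adj_child v a))
      have e0 := (cast_iff _ _).1 (hcc [])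
      have e1 := (cast_iff _ _).1 (hcc [⟨0, hm⟩])
      have e2 := (cast_iff _ _).1 (hcc [⟨0, hm⟩, ⟨0, hm⟩])
      rw [sum_nbhd_nil] at e0
      rw [sum_nbhd_cons] at e1 e2
      have hy1 : ℓ [⟨0, hm⟩] = y := rfl
      have hx2 : ℓ ([⟨0, hm⟩, ⟨0, hm⟩] : List (Fin m)) = x := hcy _ _ hy1
      rw [Finset.sum_congr rfl (fun a _ => hcx [] a rfl), Finset.sum_const,
        Finset.card_univ, Fintype.card_fin, nsmul_eq_mul] at e0
      rw [hy1, Finset.sum_congr rfl (fun a _ => hcy _ a hy1), Finset.sum_const,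
        Finset.card_univ, Fintype.card_fin, nsmul_eq_mul, ← hx] at e1
      rw [hx2, Finset.sum_congr rfl (fun a _ => hcx _ a hx2), Finset.sum_const,
        Finset.card_univ, Fintype.card_fin, nsmul_eq_mul, hy1] at e2
      rw [← hx] at e0
      push_cast at e0 e1 e2
      have hy0 : ((y : ZMod n)) = 0 := by linear_combination e2 - e0
      have hxk : ((x : ZMod n)) = (k : ZMod n) := by linear_combination e0 - (m : ZMod n) * hy0
      have : ((m : ZMod n)) * (k : ZMod n) = 0 := by
        linear_combination e1 - hy0 - hxk - (m : ZMod n) * hxk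
      exact hndvd ((ZMod.intCast_zmod_eq_zero_iff_dvd _ n).1 (by push_cast; exact this))
end

section
/- For the square lattice graph R_4 (the infinite 4-regular grid ℤ²), χ_{n,k}(R_4) = 2 if gcd(5,n) divides k, and χ_{n,k}(R_4) = 3 otherwise. -/
open SimpleGraph

/-- The square tiling of the plane: the infinite 4-regular grid on ℤ². -/
def gridGraph : SimpleGraph (ℤ × ℤ) :=
  SimpleGraph.fromRel (fun v w => (v.1 - w.1).natAbs + (v.2 - w.2).natAbs = 1)

noncomputable instance : gridGraph.LocallyFinite := fun v => by
  apply Set.Finite.fintype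
  apply Set.Finite.subset
    ((((Set.finite_singleton ((v.1, v.2 - 1) : ℤ × ℤ)).insert (v.1, v.2 + 1)).insert
      (v.1 - 1, v.2)).insert (v.1 + 1, v.2))
  rintro ⟨w1, w2⟩ hw
  rw [SimpleGraph.mem_neighborSet, gridGraph, SimpleGraph.fromRel_adj] at hw
  have h : (v.1 - w1).natAbs + (v.2 - w2).natAbs = 1 := by
    rcases hw.2 with h | h
    · exact h
    · omega
  have hcases : (w1 = v.1 + 1 ∧ w2 = v.2) ∨ (w1 = v.1 - 1 ∧ w2 = v.2) ∨
      (w1 = v.1 ∧ w2 = v.2 + 1) ∨ (w1 = v.1 ∧ w2 = v.2 - 1) := by omega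
  rcases hcases with ⟨h1, h2⟩ | ⟨h1, h2⟩ | ⟨h1, h2⟩ | ⟨h1, h2⟩ <;>
    simp [Prod.ext_iff, h1, h2]
lemma grid_nbr (v : ℤ × ℤ) : gridGraph.neighborFinset v =
    {(v.1 + 1, v.2), (v.1 - 1, v.2), (v.1, v.2 + 1), (v.1, v.2 - 1)} := by
  ext ⟨w1, w2⟩
  rw [SimpleGraph.mem_neighborFinset]
  simp only [SimpleGraph.mem_neighborFinset, gridGraph, SimpleGraph.fromRel_adj, ne_eq,
    Finset.mem_insert, Finset.mem_singleton, Prod.mk.injEq, Prod.ext_iff]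
  omega

lemma grid_adj {v w : ℤ × ℤ} : gridGraph.Adj v w ↔
    (w = (v.1 + 1, v.2) ∨ w = (v.1 - 1, v.2) ∨ w = (v.1, v.2 + 1) ∨ w = (v.1, v.2 - 1)) := by
  rw [← SimpleGraph.mem_neighborFinset, grid_nbr]
  simp

lemma sum4 (f : ℤ × ℤ → ℤ) (v : ℤ × ℤ) :
    ∑ u ∈ ({(v.1 + 1, v.2), (v.1 - 1, v.2), (v.1, v.2 + 1), (v.1, v.2 - 1)} : Finset (ℤ × ℤ)),
      f u = f (v.1 + 1, v.2) + f (v.1 - 1, v.2) + f (v.1, v.2 + 1) + f (v.1, v.2 - 1) := by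
  rw [Finset.sum_insert (by simp [Prod.ext_iff]; try omega),
    Finset.sum_insert (by simp [Prod.ext_iff]; try omega),
    Finset.sum_pair (by simp [Prod.ext_iff]; try omega)]
  ring
/-- Two-label construction: alternate `b`, `b+n` by checkerboard parity. -/
def ell2 (n b : ℤ) (p : ℤ × ℤ) : ℤ := if (p.1 + p.2) % 2 = 0 then b else b + n

/-- Three-label construction: `a` on the efficient dominating set, else `0`/`n` by parity. -/
def ell3 (n a : ℤ) (p : ℤ × ℤ) : ℤ :=
  if (p.1 + 2 * p.2) % 5 = 0 then a else if (p.1 + p.2) % 2 = 0 then 0 else n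

lemma ell2_modeq (n b : ℤ) (p : ℤ × ℤ) : ell2 n b p ≡ b [ZMOD n] := by
  unfold ell2
  split_ifs
  · rfl
  · exact Int.modEq_iff_dvd.mpr ⟨-1, by ring⟩

lemma ell2_proper {n : ℤ} (hn : 0 < n) (b : ℤ) : ProperLabeling gridGraph (ell2 n b) := by
  intro v w h
  rw [grid_adj] at h
  rcases h with h | h | h | h <;> subst h <;> unfold ell2 <;> split_ifs <;> omega

lemma ell2_closed {n b k : ℤ} (h5b : 5 * b ≡ k [ZMOD n]) :
    ClosedColoring gridGraph n k (ell2 n b) := by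
  intro v
  rw [grid_nbr, sum4]
  have hmod : ell2 n b v + (ell2 n b (v.1 + 1, v.2) + ell2 n b (v.1 - 1, v.2) +
      ell2 n b (v.1, v.2 + 1) + ell2 n b (v.1, v.2 - 1)) ≡ b + (b + b + b + b) [ZMOD n] :=
    (ell2_modeq n b v).add ((((ell2_modeq n b _).add (ell2_modeq n b _)).add
      (ell2_modeq n b _)).add (ell2_modeq n b _))
  have hb5 : b + (b + b + b + b) = 5 * b := by ring
  rw [hb5] at hmod
  exact hmod.trans h5b

lemma ell2_range {n : ℤ} (b : ℤ) : Set.range (ell2 n b) = {b, b + n} := by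
  ext x
  simp only [Set.mem_range, Set.mem_insert_iff, Set.mem_singleton_iff]
  constructor
  · rintro ⟨p, rfl⟩; unfold ell2; split_ifs <;> tauto
  · rintro (rfl | rfl)
    · exact ⟨(0, 0), by norm_num [ell2]⟩
    · exact ⟨(1, 0), by norm_num [ell2]⟩

lemma ell3_modeq (n a : ℤ) (p : ℤ × ℤ) :
    ell3 n a p ≡ (if (p.1 + 2 * p.2) % 5 = 0 then a else 0) [ZMOD n] := by
  unfold ell3
  split_ifs
  · rfl
  · rfl
  · exact Int.modEq_iff_dvd.mpr ⟨-1, by ring⟩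

lemma ell3_proper {n a : ℤ} (h0 : 0 < a) (h1 : a < n) : ProperLabeling gridGraph (ell3 n a) := by
  intro v w h
  rw [grid_adj] at h
  rcases h with h | h | h | h <;> subst h <;> unfold ell3 <;> split_ifs <;> omega

lemma ell3_closed {n a k : ℤ} (hak : a ≡ k [ZMOD n]) :
    ClosedColoring gridGraph n k (ell3 n a) := by
  intro v
  rw [grid_nbr, sum4]
  have hmod : ell3 n a v + (ell3 n a (v.1 + 1, v.2) + ell3 n a (v.1 - 1, v.2) +
      ell3 n a (v.1, v.2 + 1) + ell3 n a (v.1, v.2 - 1)) ≡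
      (if (v.1 + 2 * v.2) % 5 = 0 then a else 0) +
      ((if (v.1 + 1 + 2 * v.2) % 5 = 0 then a else 0) +
       (if (v.1 - 1 + 2 * v.2) % 5 = 0 then a else 0) +
       (if (v.1 + 2 * (v.2 + 1)) % 5 = 0 then a else 0) +
       (if (v.1 + 2 * (v.2 - 1)) % 5 = 0 then a else 0)) [ZMOD n] :=
    (ell3_modeq n a v).add ((((ell3_modeq n a _).add (ell3_modeq n a _)).add
      (ell3_modeq n a _)).add (ell3_modeq n a _))
  have hIa : (if (v.1 + 2 * v.2) % 5 = 0 then a else 0) +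
      ((if (v.1 + 1 + 2 * v.2) % 5 = 0 then a else 0) +
       (if (v.1 - 1 + 2 * v.2) % 5 = 0 then a else 0) +
       (if (v.1 + 2 * (v.2 + 1)) % 5 = 0 then a else 0) +
       (if (v.1 + 2 * (v.2 - 1)) % 5 = 0 then a else 0)) = a := by
    split_ifs <;> omega
  rw [hIa] at hmod
  exact hmod.trans hak

lemma ell3_range {n a : ℤ} (h0 : 0 < a) (h1 : a < n) :
    Set.range (ell3 n a) = {a, 0, n} := by
  ext x
  simp only [Set.mem_range, Set.mem_insert_iff, Set.mem_singleton_iff]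
  constructor
  · rintro ⟨p, rfl⟩; unfold ell3; split_ifs <;> tauto
  · rintro (rfl | rfl | rfl)
    · exact ⟨(0, 0), by norm_num [ell3]⟩
    · exact ⟨(1, 1), by norm_num [ell3]⟩
    · exact ⟨(1, 0), by norm_num [ell3]⟩
lemma lb2 (ℓ : ℤ × ℤ → ℤ) (hp : ProperLabeling gridGraph ℓ) (hf : (Set.range ℓ).Finite) :
    2 ≤ (Set.range ℓ).ncard := by
  have hadj : gridGraph.Adj (0, 0) (1, 0) := grid_adj.mpr (Or.inl (by norm_num [Prod.ext_iff]))
  have hne : ℓ (0, 0) ≠ ℓ (1, 0) := hp hadj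
  have hsub : ({ℓ (0, 0), ℓ (1, 0)} : Set ℤ) ⊆ Set.range ℓ := by
    rintro x (rfl | rfl)
    · exact ⟨_, rfl⟩
    · exact ⟨_, rfl⟩
  calc 2 = ({ℓ (0, 0), ℓ (1, 0)} : Set ℤ).ncard := (Set.ncard_pair hne).symm
    _ ≤ (Set.range ℓ).ncard := Set.ncard_le_ncard hsub hf

lemma lb3 {k : ℤ} {n : ℕ} (h5n : (5 : ℤ) ∣ (n : ℤ)) (h5k : ¬ (5 : ℤ) ∣ k)
    (ℓ : ℤ × ℤ → ℤ) (hp : ProperLabeling gridGraph ℓ)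
    (hc : ClosedColoring gridGraph n k ℓ) (hf : (Set.range ℓ).Finite) :
    3 ≤ (Set.range ℓ).ncard := by
  by_contra hlt
  push_neg at hlt
  set x := ℓ (0, 0) with hx
  set y := ℓ (1, 0) with hy
  have hadj01 : gridGraph.Adj (0, 0) (1, 0) := grid_adj.mpr (Or.inl (by norm_num [Prod.ext_iff]))
  have hne : x ≠ y := hp hadj01
  have hsub : ({x, y} : Set ℤ) ⊆ Set.range ℓ := by
    rintro z (rfl | rfl)
    · exact ⟨_, rfl⟩
    · exact ⟨_, rfl⟩
  have heq : ({x, y} : Set ℤ) = Set.range ℓ := by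
    apply Set.eq_of_subset_of_ncard_le hsub _ hf
    rw [Set.ncard_pair hne]
    omega
  have hall : ∀ v : ℤ × ℤ, ℓ v = x ∨ ℓ v = y := by
    intro v
    have : ℓ v ∈ ({x, y} : Set ℤ) := heq ▸ Set.mem_range_self v
    simpa using this
  -- labels around (0,0) are all y
  have hnb0 : ∀ w : ℤ × ℤ, gridGraph.Adj (0, 0) w → ℓ w = y := by
    intro w hw
    rcases hall w with h | h
    · exact absurd h.symm (hp hw)
    · exact h
  have hnb1 : ∀ w : ℤ × ℤ, gridGraph.Adj (1, 0) w → ℓ w = x := by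
    intro w hw
    rcases hall w with h | h
    · exact h
    · exact absurd h.symm (hp hw)
  have hsum0 := hc (0, 0)
  have hsum1 := hc (1, 0)
  rw [grid_nbr, sum4] at hsum0 hsum1
  norm_num at hsum0 hsum1
  rw [hnb0 (1, 0) (grid_adj.mpr (Or.inl (by norm_num [Prod.ext_iff]))),
    hnb0 (-1, 0) (grid_adj.mpr (Or.inr (Or.inl (by norm_num [Prod.ext_iff])))),
    hnb0 (0, 1) (grid_adj.mpr (Or.inr (Or.inr (Or.inl (by norm_num [Prod.ext_iff]))))),
    hnb0 (0, -1) (grid_adj.mpr (Or.inr (Or.inr (Or.inr (by norm_num [Prod.ext_iff]))))),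
    ← hx] at hsum0
  rw [hnb1 (2, 0) (grid_adj.mpr (Or.inl (by norm_num [Prod.ext_iff]))),
    hnb1 (0, 0) (grid_adj.mpr (Or.inr (Or.inl (by norm_num [Prod.ext_iff])))),
    hnb1 (1, 1) (grid_adj.mpr (Or.inr (Or.inr (Or.inl (by norm_num [Prod.ext_iff]))))),
    hnb1 (1, -1) (grid_adj.mpr (Or.inr (Or.inr (Or.inr (by norm_num [Prod.ext_iff]))))),
    ← hy] at hsum1
  have h0 : x + (y + y + y + y) ≡ k [ZMOD 5] := (hsum0.of_dvd h5n)
  have h1 : y + (x + x + x + x) ≡ k [ZMOD 5] := (hsum1.of_dvd h5n)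
  have hadd := h0.add h1
  rw [Int.modEq_iff_dvd] at hadd
  obtain ⟨c, hcc⟩ := hadd
  exact h5k (by omega)
theorem chi_gridGraph (k : ℤ) (n : ℕ) (hn : 0 < n) :
    ((Int.gcd 5 n : ℤ) ∣ k → HasClosedChrom gridGraph n k 2) ∧
    (¬ (Int.gcd 5 n : ℤ) ∣ k → HasClosedChrom gridGraph n k 3) := by
  have hnz : (0 : ℤ) < (n : ℤ) := by exact_mod_cast hn
  constructor
  · intro hdk
    obtain ⟨m, hm⟩ := hdk
    have hbez : (Int.gcd 5 (n : ℤ) : ℤ) = 5 * Int.gcdA 5 n + n * Int.gcdB 5 n :=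
      Int.gcd_eq_gcd_ab 5 n
    set b : ℤ := Int.gcdA 5 n * m with hb
    have h5b : 5 * b ≡ k [ZMOD (n : ℤ)] := by
      rw [Int.modEq_iff_dvd]
      exact ⟨Int.gcdB 5 n * m, by rw [hm, hbez]; ring⟩
    refine ⟨⟨ell2 n b, ell2_proper hnz b, ell2_closed h5b, ?_, ?_⟩,
      fun ℓ hp _ hf => lb2 ℓ hp hf⟩
    · rw [ell2_range b]; exact (Set.finite_singleton _).insert _
    · rw [ell2_range b, Set.ncard_pair (by omega)]
  · intro hnd
    have hgd5 : (Int.gcd 5 (n : ℤ) : ℤ) ∣ (5 : ℤ) := Int.gcd_dvd_left 5 n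
    have hgd5' : Int.gcd 5 (n : ℤ) ∣ 5 := by exact_mod_cast hgd5
    rcases (Nat.Prime.eq_one_or_self_of_dvd (by norm_num) _ hgd5') with h1 | h5
    · exact absurd (by rw [h1]; exact ⟨k, by push_cast; ring⟩) hnd
    · have h5n : (5 : ℤ) ∣ (n : ℤ) := by
        have h := Int.gcd_dvd_right (a := 5) (b := (n : ℤ))
        rw [h5] at h
        exact_mod_cast h
      have h5k : ¬ (5 : ℤ) ∣ k := by
        rw [h5] at hnd
        exact_mod_cast hnd
      have hnk : ¬ (n : ℤ) ∣ k := fun h => h5k (h5n.trans h)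
      set a := k % (n : ℤ) with ha
      have ha0 : 0 < a :=
        lt_of_le_of_ne (Int.emod_nonneg k (by omega))
          (fun h => hnk (Int.dvd_of_emod_eq_zero h.symm))
      have han : a < n := Int.emod_lt_of_pos k hnz
      have hak : a ≡ k [ZMOD (n : ℤ)] := Int.emod_emod_of_dvd k dvd_rfl
      refine ⟨⟨ell3 n a, ell3_proper ha0 han, ell3_closed hak, ?_, ?_⟩, lb3 h5n h5k⟩
      · rw [ell3_range ha0 han]; exact Set.toFinite _
      · rw [ell3_range ha0 han]
        exact Set.ncard_eq_three.mpr ⟨a, 0, (n : ℤ), by omega, by omega, by omega, rfl⟩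
end

section
/- Let m₁, m₂, n be positive integers which are parameters of the caterpillar tree C_{m₁,m₂} (two adjacent vertices x, y, with m₁ leaves attached to x and m₂ leaves attached to y), and let M = m₁m₂ − m₁ − m₂. Then C_{m₁,m₂} admits a closed coloring with remainder k mod n if and only if gcd(M, n) divides m₁k (equivalently, gcd(M,n) divides m₂k). -/
open SimpleGraph

/-- The caterpillar tree `C_{m₁,m₂}`: two adjacent vertices `x = Sum.inl none`
and `y = Sum.inr none`, with m₁ leaves attached to x and m₂ leaves attached to y. -/
def caterpillar (m₁ m₂ : ℕ) : SimpleGraph (Option (Fin m₁) ⊕ Option (Fin m₂)) :=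
  SimpleGraph.fromRel (fun v w =>
    (v = Sum.inl none ∧ w = Sum.inr none) ∨
    (∃ i, v = Sum.inl none ∧ w = Sum.inl (some i)) ∨
    (∃ j, v = Sum.inr none ∧ w = Sum.inr (some j)))

noncomputable instance (m₁ m₂ : ℕ) : (caterpillar m₁ m₂).LocallyFinite :=
  fun _ => (Set.toFinite _).fintype

lemma cat_nf_x (m₁ m₂ : ℕ) :
    (caterpillar m₁ m₂).neighborFinset (Sum.inl none) =
      insert (Sum.inr none) (Finset.univ.image (fun i : Fin m₁ => Sum.inl (some i))) := by
  ext u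
  rw [mem_neighborFinset]
  simp only [mem_neighborFinset, caterpillar, fromRel_adj, Finset.mem_insert,
    Finset.mem_image, Finset.mem_univ, true_and]
  rcases u with (_|i)|(_|j) <;> simp

lemma cat_nf_y (m₁ m₂ : ℕ) :
    (caterpillar m₁ m₂).neighborFinset (Sum.inr none) =
      insert (Sum.inl none) (Finset.univ.image (fun j : Fin m₂ => Sum.inr (some j))) := by
  ext u
  rw [mem_neighborFinset]
  simp only [mem_neighborFinset, caterpillar, fromRel_adj, Finset.mem_insert,
    Finset.mem_image, Finset.mem_univ, true_and]
  rcases u with (_|i)|(_|j) <;> simp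

lemma cat_nf_lx (m₁ m₂ : ℕ) (i : Fin m₁) :
    (caterpillar m₁ m₂).neighborFinset (Sum.inl (some i)) = {Sum.inl none} := by
  ext u
  rw [mem_neighborFinset]
  simp only [mem_neighborFinset, caterpillar, fromRel_adj, Finset.mem_singleton]
  rcases u with (_|j)|(_|j) <;> simp

lemma cat_nf_ly (m₁ m₂ : ℕ) (j : Fin m₂) :
    (caterpillar m₁ m₂).neighborFinset (Sum.inr (some j)) = {Sum.inr none} := by
  ext u
  rw [mem_neighborFinset]
  simp only [mem_neighborFinset, caterpillar, fromRel_adj, Finset.mem_singleton]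
  rcases u with (_|i)|(_|i) <;> simp

/-- the standard labeling -/
def catLab {m₁ m₂ : ℕ} (a b k : ℤ) : Option (Fin m₁) ⊕ Option (Fin m₂) → ℤ
  | Sum.inl none => a
  | Sum.inl (some _) => k - a
  | Sum.inr none => b
  | Sum.inr (some _) => k - b

/-- Existence of a closed coloring iff the two congruences are solvable. -/
lemma cat_exists_iff (k : ℤ) (m₁ m₂ n : ℕ) :
    (∃ ℓ, ClosedColoring (caterpillar m₁ m₂) n k ℓ) ↔
      ∃ a b : ℤ, (n : ℤ) ∣ (b - ((m₁ : ℤ) - 1) * (a - k)) ∧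
        (n : ℤ) ∣ (a - ((m₂ : ℤ) - 1) * (b - k)) := by
  constructor
  · rintro ⟨ℓ, hℓ⟩
    set a := ℓ (Sum.inl none) with ha
    set b := ℓ (Sum.inr none) with hb
    refine ⟨a, b, ?_, ?_⟩
    · have hx := hℓ (Sum.inl none)
      rw [cat_nf_x, Finset.sum_insert (by simp), Finset.sum_image (fun x _ y _ h => by simpa using h)] at hx
      set S := ∑ i : Fin m₁, ℓ (Sum.inl (some i)) with hS
      have hX : (n : ℤ) ∣ k - (a + (b + S)) := Int.ModEq.dvd hx
      have hDdvd : (n : ℤ) ∣ ∑ i : Fin m₁, (k - (ℓ (Sum.inl (some i)) + a)) := by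
        refine Finset.dvd_sum fun i _ => ?_
        have := hℓ (Sum.inl (some i))
        rw [cat_nf_lx, Finset.sum_singleton] at this
        exact Int.ModEq.dvd this
      have hD : (∑ i : Fin m₁, (k - (ℓ (Sum.inl (some i)) + a))) = (m₁ : ℤ) * (k - a) - S := by
        rw [Finset.sum_sub_distrib, Finset.sum_add_distrib]
        simp [mul_comm, mul_sub]
        ring
      rw [hD] at hDdvd
      have := hX.sub hDdvd
      have h2 : k - (a + (b + S)) - ((m₁ : ℤ) * (k - a) - S) = -(b - ((m₁:ℤ) - 1) * (a - k)) := by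
        ring
      rw [h2] at this
      exact dvd_neg.mp this
    · have hy := hℓ (Sum.inr none)
      rw [cat_nf_y, Finset.sum_insert (by simp), Finset.sum_image (fun x _ y _ h => by simpa using h)] at hy
      set S := ∑ j : Fin m₂, ℓ (Sum.inr (some j)) with hS
      have hX : (n : ℤ) ∣ k - (b + (a + S)) := Int.ModEq.dvd hy
      have hDdvd : (n : ℤ) ∣ ∑ j : Fin m₂, (k - (ℓ (Sum.inr (some j)) + b)) := by
        refine Finset.dvd_sum fun j _ => ?_
        have := hℓ (Sum.inr (some j))
        rw [cat_nf_ly, Finset.sum_singleton] at this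
        exact Int.ModEq.dvd this
      have hD : (∑ j : Fin m₂, (k - (ℓ (Sum.inr (some j)) + b))) = (m₂ : ℤ) * (k - b) - S := by
        rw [Finset.sum_sub_distrib, Finset.sum_add_distrib]
        simp [mul_comm, mul_sub]
        ring
      rw [hD] at hDdvd
      have := hX.sub hDdvd
      have h2 : k - (b + (a + S)) - ((m₂ : ℤ) * (k - b) - S) = -(a - ((m₂:ℤ) - 1) * (b - k)) := by
        ring
      rw [h2] at this
      exact dvd_neg.mp this
  · rintro ⟨a, b, h1, h2⟩
    refine ⟨catLab a b k, fun v => ?_⟩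
    rcases v with (_|i)|(_|j)
    · rw [cat_nf_x, Finset.sum_insert (by simp), Finset.sum_image (fun x _ y _ h => by simpa using h)]
      simp only [catLab, Finset.sum_const, Finset.card_univ, Fintype.card_fin,
        nsmul_eq_mul]
      refine Int.modEq_iff_dvd.mpr ?_
      rw [show k - (a + (b + (m₁ : ℤ) * (k - a))) = -(b - ((m₁:ℤ) - 1) * (a - k)) by ring]
      exact dvd_neg.mpr h1
    · rw [cat_nf_lx, Finset.sum_singleton]
      show (k - a) + a ≡ k [ZMOD n]
      simp [Int.ModEq]
    · rw [cat_nf_y, Finset.sum_insert (by simp), Finset.sum_image (fun x _ y _ h => by simpa using h)]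
      simp only [catLab, Finset.sum_const, Finset.card_univ, Fintype.card_fin,
        nsmul_eq_mul]
      refine Int.modEq_iff_dvd.mpr ?_
      rw [show k - (b + (a + (m₂ : ℤ) * (k - b))) = -(a - ((m₂:ℤ) - 1) * (b - k)) by ring]
      exact dvd_neg.mpr h2
    · rw [cat_nf_ly, Finset.sum_singleton]
      show (k - b) + b ≡ k [ZMOD n]
      simp [Int.ModEq]

lemma lin_cong_solvable_iff (M : ℤ) (n : ℕ) (c : ℤ) :
    (∃ t : ℤ, (n : ℤ) ∣ M * t - c) ↔ (Int.gcd M n : ℤ) ∣ c := by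
  constructor
  · rintro ⟨t, h⟩
    have h1 : (Int.gcd M n : ℤ) ∣ M * t := Dvd.dvd.mul_right (Int.gcd_dvd_left M (n:ℤ)) t
    have h2 : (Int.gcd M n : ℤ) ∣ M * t - c := dvd_trans (Int.gcd_dvd_right M (n:ℤ)) h
    have := h1.sub h2
    simpa using this
  · rintro ⟨s, hs⟩
    refine ⟨Int.gcdA M n * s, ?_⟩
    have hb := Int.gcd_eq_gcd_ab M n
    refine ⟨-(Int.gcdB M n * s), ?_⟩
    rw [hs, hb]
    ring

lemma pair_iff (k M : ℤ) (m₁ m₂ : ℕ) (n : ℕ)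
    (hM : M = (m₁ : ℤ) * m₂ - m₁ - m₂) :
    (∃ a b : ℤ, (n : ℤ) ∣ (b - ((m₁ : ℤ) - 1) * (a - k)) ∧
        (n : ℤ) ∣ (a - ((m₂ : ℤ) - 1) * (b - k))) ↔
      (∃ t : ℤ, (n : ℤ) ∣ M * t - (m₁ : ℤ) * k) := by
  constructor
  · rintro ⟨a, b, h1, h2⟩
    refine ⟨b - k, ?_⟩
    have := (h2.mul_left ((m₁ : ℤ) - 1)).add h1
    rw [show ((m₁:ℤ) - 1) * (a - ((m₂:ℤ) - 1) * (b - k)) + (b - ((m₁:ℤ) - 1) * (a - k))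
      = -(M * (b - k) - (m₁:ℤ) * k) by rw [hM]; ring] at this
    exact dvd_neg.mp this
  · rintro ⟨t, h⟩
    refine ⟨((m₂ : ℤ) - 1) * t, t + k, ?_, by simp⟩
    rw [show t + k - ((m₁:ℤ) - 1) * (((m₂:ℤ) - 1) * t - k) = -(M * t - (m₁:ℤ) * k) by
      rw [hM]; ring]
    exact dvd_neg.mpr h

lemma pair_iff' (k M : ℤ) (m₁ m₂ : ℕ) (n : ℕ)
    (hM : M = (m₁ : ℤ) * m₂ - m₁ - m₂) :
    (∃ a b : ℤ, (n : ℤ) ∣ (b - ((m₁ : ℤ) - 1) * (a - k)) ∧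
        (n : ℤ) ∣ (a - ((m₂ : ℤ) - 1) * (b - k))) ↔
      (∃ t : ℤ, (n : ℤ) ∣ M * t - (m₂ : ℤ) * k) := by
  constructor
  · rintro ⟨a, b, h1, h2⟩
    refine ⟨a - k, ?_⟩
    have := (h1.mul_left ((m₂ : ℤ) - 1)).add h2
    rw [show ((m₂:ℤ) - 1) * (b - ((m₁:ℤ) - 1) * (a - k)) + (a - ((m₂:ℤ) - 1) * (b - k))
      = -(M * (a - k) - (m₂:ℤ) * k) by rw [hM]; ring] at this
    exact dvd_neg.mp this
  · rintro ⟨t, h⟩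
    refine ⟨t + k, ((m₁ : ℤ) - 1) * t, by simp, ?_⟩
    rw [show t + k - ((m₂:ℤ) - 1) * (((m₁:ℤ) - 1) * t - k) = -(M * t - (m₂:ℤ) * k) by
      rw [hM]; ring]
    exact dvd_neg.mpr h

theorem caterpillar_coloring_exists_iff (k : ℤ) (m₁ m₂ n : ℕ)
    (hm₁ : 0 < m₁) (hm₂ : 0 < m₂) (hn : 0 < n) :
    ((∃ ℓ, ClosedColoring (caterpillar m₁ m₂) n k ℓ) ↔
        (Int.gcd ((m₁ : ℤ) * m₂ - m₁ - m₂) n : ℤ) ∣ (m₁ : ℤ) * k) ∧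
    ((∃ ℓ, ClosedColoring (caterpillar m₁ m₂) n k ℓ) ↔
        (Int.gcd ((m₁ : ℤ) * m₂ - m₁ - m₂) n : ℤ) ∣ (m₂ : ℤ) * k) := by
  constructor
  · rw [cat_exists_iff k m₁ m₂ n, pair_iff k _ m₁ m₂ n rfl,
      lin_cong_solvable_iff]
  · rw [cat_exists_iff k m₁ m₂ n, pair_iff' k _ m₁ m₂ n rfl,
      lin_cong_solvable_iff]
end

section
/- Let n, m, j be positive integers with 4 | n. If the generalized Petersen graph G(m,j) admits a closed coloring with remainder 1 mod n, then m is even. -/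
open SimpleGraph

/-- The generalized Petersen graph G(m,j): exterior vertices `(false, i)` (the `v i`)
and interior vertices `(true, i)` (the `u i`), with edges
`v i — v (i+1)`, `v i — u i`, and `u i — u (i+j)`, indices in ZMod m. -/
def genPetersen (m j : ℕ) : SimpleGraph (Bool × ZMod m) :=
  SimpleGraph.fromRel (fun a b =>
    (a.1 = false ∧ b.1 = false ∧ b.2 = a.2 + 1) ∨
    (a.1 = false ∧ b.1 = true ∧ b.2 = a.2) ∨
    (a.1 = true ∧ b.1 = true ∧ b.2 = a.2 + (j : ZMod m)))

noncomputable instance (m j : ℕ) [NeZero m] : (genPetersen m j).LocallyFinite :=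
  fun _ => (Set.toFinite _).fintype


private lemma sum_nbr_sum {V : Type*} [Fintype V] (G : SimpleGraph V) [G.LocallyFinite]
    (f : V → ℤ) :
    ∑ v, ∑ u ∈ G.neighborFinset v, f u = ∑ u, (G.degree u : ℤ) * f u := by
  classical
  calc ∑ v, ∑ u ∈ G.neighborFinset v, f u
      = ∑ v, ∑ u, if G.Adj v u then f u else 0 := by
        refine Finset.sum_congr rfl fun v _ => ?_
        have hv : G.neighborFinset v = Finset.univ.filter (G.Adj v) := by
          ext u; simp [SimpleGraph.mem_neighborFinset]
        rw [hv, Finset.sum_filter]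
    _ = ∑ u, ∑ v, if G.Adj v u then f u else 0 := Finset.sum_comm
    _ = ∑ u, (G.degree u : ℤ) * f u := by
        refine Finset.sum_congr rfl fun u _ => ?_
        rw [← Finset.sum_filter]
        have hu : Finset.univ.filter (fun v => G.Adj v u) = G.neighborFinset u := by
          ext v; simp [SimpleGraph.mem_neighborFinset, SimpleGraph.adj_comm]
        rw [hu, Finset.sum_const, SimpleGraph.degree, nsmul_eq_mul]

private lemma genPetersen_degree {m j : ℕ} [NeZero m]
    (hm : 3 ≤ m) (hj : 1 ≤ j) (hjm : 2 * j < m) (v : Bool × ZMod m) :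
    (genPetersen m j).degree v = 3 := by
  classical
  have h1 : (1 : ZMod m) ≠ 0 := by
    intro h
    have h' : ((1 : ℕ) : ZMod m) = 0 := by exact_mod_cast h
    rw [ZMod.natCast_eq_zero_iff] at h'
    have := Nat.le_of_dvd one_pos h'
    omega
  have h2 : (2 : ZMod m) ≠ 0 := by
    intro h
    have h' : ((2 : ℕ) : ZMod m) = 0 := by exact_mod_cast h
    rw [ZMod.natCast_eq_zero_iff] at h'
    have := Nat.le_of_dvd two_pos h'
    omega
  have hjne : (j : ZMod m) ≠ 0 := by
    intro h
    rw [ZMod.natCast_eq_zero_iff] at h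
    have := Nat.le_of_dvd (by omega) h
    omega
  have h2j : (2 * j : ZMod m) ≠ 0 := by
    intro h
    have h' : ((2 * j : ℕ) : ZMod m) = 0 := by push_cast; linear_combination h
    rw [ZMod.natCast_eq_zero_iff] at h'
    have := Nat.le_of_dvd (by omega) h'
    omega
  obtain ⟨b, i⟩ := v
  rw [SimpleGraph.degree]
  cases b
  · have hset : (genPetersen m j).neighborFinset (false, i) =
        {(false, i + 1), (false, i - 1), (true, i)} := by
      ext ⟨c, y⟩
      rw [SimpleGraph.mem_neighborFinset]
      rw [show (genPetersen m j).Adj (false, i) (c, y) ↔ _ from SimpleGraph.fromRel_adj _ _ _]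
      cases c <;> simp only [Finset.mem_insert, Finset.mem_singleton, Prod.mk.injEq, ne_eq,
        Bool.false_eq_true, Bool.true_eq_false, false_and, and_false, true_and, and_true,
        false_or, or_false]
      · constructor
        · rintro ⟨hne, (rfl | hyy)⟩
          · exact Or.inl rfl
          · right; linear_combination -hyy
        · rintro (rfl | rfl)
          · exact ⟨fun hh => h1 (by linear_combination -hh), Or.inl rfl⟩
          · exact ⟨fun hh => h1 (by linear_combination hh), Or.inr (by ring)⟩
      · simp
    rw [hset, Finset.card_insert_of_notMem, Finset.card_insert_of_notMem,
      Finset.card_singleton]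
    · simp
    · simp only [Finset.mem_insert, Finset.mem_singleton, Prod.mk.injEq, not_or, not_and]
      exact ⟨fun _ hh => h2 (by linear_combination hh), by simp⟩
  · have hset : (genPetersen m j).neighborFinset (true, i) =
        {(true, i + (j : ZMod m)), (true, i - (j : ZMod m)), (false, i)} := by
      ext ⟨c, y⟩
      rw [SimpleGraph.mem_neighborFinset]
      rw [show (genPetersen m j).Adj (true, i) (c, y) ↔ _ from SimpleGraph.fromRel_adj _ _ _]
      cases c <;> simp only [Finset.mem_insert, Finset.mem_singleton, Prod.mk.injEq, ne_eq,
        Bool.false_eq_true, Bool.true_eq_false, false_and, and_false, true_and, and_true,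
        false_or, or_false]
      · simp [eq_comm]
      · constructor
        · rintro ⟨hne, (rfl | hyy)⟩
          · exact Or.inl rfl
          · right; linear_combination -hyy
        · rintro (rfl | rfl)
          · exact ⟨fun hh => hjne (by linear_combination -hh), Or.inl rfl⟩
          · exact ⟨fun hh => hjne (by linear_combination hh), Or.inr (by ring)⟩
    rw [hset, Finset.card_insert_of_notMem, Finset.card_insert_of_notMem,
      Finset.card_singleton]
    · simp
    · simp only [Finset.mem_insert, Finset.mem_singleton, Prod.mk.injEq, not_or, not_and]
      exact ⟨fun _ hh => h2j (by linear_combination hh), by simp⟩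

theorem genPetersen_remainder_one_even (m j n : ℕ) [NeZero m]
    (hm : 3 ≤ m) (hj : 1 ≤ j) (hjm : 2 * j < m) (h4n : 4 ∣ n)
    (h : ∃ ℓ, ClosedColoring (genPetersen m j) n 1 ℓ) :
    Even m := by
  classical
  obtain ⟨ℓ, hℓ⟩ := h
  have hdeg := genPetersen_degree (j := j) hm hj hjm
  set G := genPetersen m j
  set S : ℤ := ∑ v : Bool × ZMod m, ℓ v with hS
  -- total sum of closed neighborhood sums equals 4S
  have htot : ∑ v : Bool × ZMod m, (ℓ v + ∑ u ∈ G.neighborFinset v, ℓ u) = 4 * S := by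
    rw [Finset.sum_add_distrib, sum_nbr_sum]
    have : ∑ u : Bool × ZMod m, (G.degree u : ℤ) * ℓ u = ∑ u : Bool × ZMod m, 3 * ℓ u := by
      refine Finset.sum_congr rfl fun u _ => ?_
      rw [hdeg u]; norm_num
    rw [this, ← Finset.mul_sum, ← hS]; ring
  have hzn : ((2 * m : ℕ) : ZMod n) = 4 * (S : ZMod n) := by
    have hkey : ((∑ v : Bool × ZMod m, (ℓ v + ∑ u ∈ G.neighborFinset v, ℓ u) : ℤ) : ZMod n)
        = ∑ _v : Bool × ZMod m, (1 : ZMod n) := by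
      rw [Int.cast_sum]
      refine Finset.sum_congr rfl fun v _ => ?_
      have h2 := (ZMod.intCast_eq_intCast_iff _ _ _).mpr (hℓ v)
      simpa using h2
    rw [htot] at hkey
    have hc : ∑ _v : Bool × ZMod m, (1 : ZMod n) = ((2 * m : ℕ) : ZMod n) := by
      rw [Finset.sum_const, Finset.card_univ, nsmul_eq_mul, mul_one]
      congr 1
      simp [Fintype.card_prod, ZMod.card, mul_comm]
    rw [hc] at hkey
    rw [← hkey]
    push_cast
    ring
  have hz4 : ((2 * m : ℕ) : ZMod 4) = 0 := by
    have h := congrArg (ZMod.castHom h4n (ZMod 4)) hzn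
    rw [map_natCast, map_mul] at h
    rw [h]
    have h4 : (ZMod.castHom h4n (ZMod 4)) (4 : ZMod n) = 0 := by
      rw [show (4 : ZMod n) = ((4 : ℕ) : ZMod n) by norm_num, map_natCast]
      decide
    rw [h4, zero_mul]
  rw [ZMod.natCast_eq_zero_iff] at hz4
  rw [Nat.even_iff]
  omega
end
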